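/- arXiv:1710.08436 — 4 statements merged into one kernel-verified Lean document; each statement's English description precedes it below -/
import Mathlib

section
/- Let A and B be finite nonempty sets contained in a finite universe S, and let (h(s))_{s∈S} be a family of independent random variables each uniformly distributed on [0,1]. Then the probability that the minimum hash values of A and B coincide equals the Jaccard index: P( min_{a∈A} h(a) = min_{b∈B} h(b) ) = |A ∩ B| / |A ∪ B|. -/
open MeasureTheory ProbabilityTheory
open scoped ENNReal

namespace MinHashAux

/-- The uniform measure on `[0,1]`. -/
noncomputable def U : Measure ℝ := volume.restrict (Set.Icc (0 : ℝ) 1)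

instance : IsProbabilityMeasure U :=
  ⟨by simp [U, Real.volume_Icc]⟩

lemma U_singleton (x : ℝ) : U {x} = 0 := by
  rw [U, Measure.restrict_apply (measurableSet_singleton x)]
  exact measure_mono_null Set.inter_subset_left (by simp)

/-- The product of `n` copies of a measure on `ℝ` is invariant under coordinate
permutations. -/
lemma pi_map_comp_equiv {ι : Type*} [Fintype ι] (m : Measure ℝ) [IsProbabilityMeasure m]
    (σ : ι ≃ ι) :
    Measure.map (fun x : ι → ℝ => x ∘ σ) (Measure.pi fun _ : ι => m)
      = Measure.pi fun _ : ι => m := by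
  have hm : Measurable fun x : ι → ℝ => x ∘ σ :=
    measurable_pi_lambda _ fun i => measurable_pi_apply (σ i)
  refine (Measure.pi_eq fun s hs => ?_).symm
  rw [Measure.map_apply hm (MeasurableSet.univ_pi hs)]
  have hpre : (fun x : ι → ℝ => x ∘ σ) ⁻¹' Set.pi Set.univ s
      = Set.pi Set.univ (fun j => s (σ.symm j)) := by
    ext x
    simp only [Set.mem_preimage, Set.mem_pi, Set.mem_univ, true_implies, Function.comp]
    constructor
    · intro H j
      simpa using H (σ.symm j)
    · intro H i
      simpa using H (σ i)
  rw [hpre, Measure.pi_pi]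
  exact Equiv.prod_comp σ.symm (fun i => m (s i))

/-- The "strict argmin at `s`" set. -/
def Sset {ι : Type*} (AB : Finset ι) (s : ι) : Set (ι → ℝ) :=
  {x | ∀ t ∈ AB, t ≠ s → x s < x t}

lemma Sset_measurable {ι : Type*} [Fintype ι] (AB : Finset ι) (s : ι) :
    MeasurableSet (Sset AB s) := by
  have : Sset AB s = ⋂ t, ⋂ (_ : t ∈ AB), ⋂ (_ : t ≠ s), {x : ι → ℝ | x s < x t} := by
    ext x; simp [Sset]
  rw [this]
  exact MeasurableSet.iInter fun t => MeasurableSet.iInter fun _ =>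
    MeasurableSet.iInter fun _ =>
      measurableSet_lt (measurable_pi_apply s) (measurable_pi_apply t)

lemma pi_Sset_swap {ι : Type*} [Fintype ι] [DecidableEq ι] (m : Measure ℝ)
    [IsProbabilityMeasure m] (AB : Finset ι) {s s' : ι} (hs : s ∈ AB) (hs' : s' ∈ AB) :
    Measure.pi (fun _ : ι => m) (Sset AB s) = Measure.pi (fun _ : ι => m) (Sset AB s') := by
  set σ : ι ≃ ι := Equiv.swap s s' with hσ
  have hσs : σ s = s' := Equiv.swap_apply_left s s'
  have hmemσ : ∀ u ∈ AB, σ u ∈ AB := by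
    intro u hu
    rcases eq_or_ne u s with rfl | h1
    · rwa [hσs]
    rcases eq_or_ne u s' with rfl | h2
    · rwa [hσ, Equiv.swap_apply_right]
    · rwa [hσ, Equiv.swap_apply_of_ne_of_ne h1 h2]
  have hσσ : ∀ u, σ (σ u) = u := fun u => Equiv.swap_apply_self s s' u
  have hm : Measurable fun x : ι → ℝ => x ∘ σ :=
    measurable_pi_lambda _ fun i => measurable_pi_apply (σ i)
  have hpre : (fun x : ι → ℝ => x ∘ σ) ⁻¹' Sset AB s = Sset AB s' := by
    ext x
    simp only [Set.mem_preimage, Sset, Set.mem_setOf_eq, Function.comp]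
    constructor
    · intro H u hu hus'
      have h1 : σ u ∈ AB := hmemσ u hu
      have h2 : σ u ≠ s := by
        intro he
        apply hus'
        have := congrArg σ he
        rwa [hσσ, hσs] at this
      have := H (σ u) h1 h2
      rwa [hσs, hσσ] at this
    · intro H t ht hts
      have h1 : σ t ∈ AB := hmemσ t ht
      have h2 : σ t ≠ s' := by
        intro he
        apply hts
        rw [← hσs] at he
        exact σ.injective he
      rw [hσs]
      exact H (σ t) h1 h2
  calc Measure.pi (fun _ : ι => m) (Sset AB s)
      = Measure.map (fun x : ι → ℝ => x ∘ σ) (Measure.pi fun _ : ι => m) (Sset AB s) := by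
        rw [pi_map_comp_equiv]
    _ = Measure.pi (fun _ : ι => m) ((fun x : ι → ℝ => x ∘ σ) ⁻¹' Sset AB s) :=
        Measure.map_apply hm (Sset_measurable AB s)
    _ = Measure.pi (fun _ : ι => m) (Sset AB s') := by rw [hpre]

end MinHashAux

open MinHashAux

/-- **MinHash collision probability equals the Jaccard index.**
For finite nonempty sets `A`, `B` in a finite universe `ι`, and independent
uniform-`[0,1]` hashes `h s`, the probability that the minimum hash values of
`A` and `B` coincide equals `|A ∩ B| / |A ∪ B|`. -/
theorem minhash_collision_eq_jaccard
    {Ω ι : Type*} [MeasurableSpace Ω] [Fintype ι] [DecidableEq ι]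
    (μ : Measure Ω) [IsProbabilityMeasure μ]
    (h : ι → Ω → ℝ)
    (hmeas : ∀ s, Measurable (h s))
    (hindep : iIndepFun h μ)
    (hunif : ∀ s, Measure.map (h s) μ = volume.restrict (Set.Icc (0 : ℝ) 1))
    (A B : Finset ι) (hA : A.Nonempty) (hB : B.Nonempty) :
    (μ {ω | A.inf' hA (fun a => h a ω) = B.inf' hB (fun b => h b ω)}).toReal
      = ((A ∩ B).card : ℝ) / ((A ∪ B).card : ℝ) := by
  classical
  have hunif' : ∀ s, Measure.map (h s) μ = U := hunif
  set ν : Measure (ι → ℝ) := Measure.pi (fun _ : ι => U) with hν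
  set J : Ω → (ι → ℝ) := fun ω t => h t ω with hJ
  have hJmeas : Measurable J := measurable_pi_lambda _ hmeas
  -- Step 1: the joint law is the product of uniforms
  have hmap : Measure.map J μ = ν := by
    refine (Measure.pi_eq fun s hs => ?_).symm
    rw [Measure.map_apply hJmeas (MeasurableSet.univ_pi hs)]
    have hset : J ⁻¹' Set.pi Set.univ s = ⋂ t ∈ (Finset.univ : Finset ι), h t ⁻¹' s t := by
      ext ω; simp [hJ, Set.mem_pi]
    rw [hset, hindep.measure_inter_preimage_eq_mul Finset.univ (fun i _ => hs i)]
    exact Finset.prod_congr rfl fun t _ => by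
      rw [← hunif' t, Measure.map_apply (hmeas t) (hs t)]
  -- the law of each "argmin" event
  have hE : ∀ s, μ (J ⁻¹' Sset (A ∪ B) s) = ν (Sset (A ∪ B) s) := fun s => by
    rw [← hmap, Measure.map_apply hJmeas (Sset_measurable _ s)]
  have hEmeas : ∀ s, MeasurableSet (J ⁻¹' Sset (A ∪ B) s) :=
    fun s => hJmeas (Sset_measurable _ s)
  have hEmem : ∀ s ω, ω ∈ J ⁻¹' Sset (A ∪ B) s ↔ ∀ t ∈ A ∪ B, t ≠ s → h s ω < h t ω := by
    intro s ω; simp [Sset, hJ]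
  -- Step 2: ties are null
  have htie : ∀ s t : ι, s ≠ t → μ {ω | h s ω = h t ω} = 0 := by
    intro s t hst
    have hi : IndepFun (h s) (h t) μ := hindep.indepFun hst
    have hmap2 : μ.map (fun ω => (h s ω, h t ω)) = (μ.map (h s)).prod (μ.map (h t)) :=
      (indepFun_iff_map_prod_eq_prod_map_map (hmeas s).aemeasurable
        (hmeas t).aemeasurable).1 hi
    have hdiag : MeasurableSet {p : ℝ × ℝ | p.1 = p.2} :=
      measurableSet_eq_fun measurable_fst measurable_snd
    have hset : {ω | h s ω = h t ω} = (fun ω => (h s ω, h t ω)) ⁻¹' {p | p.1 = p.2} := rfl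
    rw [hset, ← Measure.map_apply ((hmeas s).prodMk (hmeas t)) hdiag, hmap2,
      hunif' s, hunif' t, Measure.prod_apply hdiag]
    have hfib : ∀ x : ℝ, (Prod.mk x ⁻¹' {p : ℝ × ℝ | p.1 = p.2}) = {x} := by
      intro x; ext y; simp [eq_comm]
    simp [hfib, U_singleton]
  set T : Set Ω := ⋃ s, ⋃ t, ⋃ (_ : s ≠ t), {ω | h s ω = h t ω} with hT
  have hTnull : μ T = 0 :=
    measure_iUnion_null fun s => measure_iUnion_null fun t =>
      measure_iUnion_null fun hst => htie s t hst
  have hTnot : ∀ ω, ω ∉ T → ∀ s t : ι, s ≠ t → h s ω ≠ h t ω := by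
    intro ω hω s t hst he
    exact hω (Set.mem_iUnion.2 ⟨s, Set.mem_iUnion.2 ⟨t, Set.mem_iUnion.2 ⟨hst, he⟩⟩⟩)
  -- Step 3: the events are pairwise disjoint and cover up to null
  have hAB : (A ∪ B).Nonempty := hA.mono Finset.subset_union_left
  have hdisj : (↑(A ∪ B) : Set ι).PairwiseDisjoint fun s => J ⁻¹' Sset (A ∪ B) s := by
    intro s hs t ht hst
    simp only [Finset.coe_mem, Finset.mem_coe] at hs ht
    refine Set.disjoint_left.2 fun ω hωs hωt => ?_
    have h1 := (hEmem s ω).1 hωs t ht (Ne.symm hst)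
    have h2 := (hEmem t ω).1 hωt s hs hst
    exact absurd (h1.trans h2) (lt_irrefl _)
  have hcover : (Set.univ : Set Ω) ⊆ (⋃ s ∈ A ∪ B, J ⁻¹' Sset (A ∪ B) s) ∪ T := by
    intro ω _
    by_cases hωT : ω ∈ T
    · exact Or.inr hωT
    · left
      obtain ⟨s₀, hs₀mem, hs₀⟩ := Finset.exists_mem_eq_inf' hAB (fun t => h t ω)
      refine Set.mem_biUnion hs₀mem ((hEmem s₀ ω).2 fun t ht hts => ?_)
      refine lt_of_le_of_ne ?_ (hTnot ω hωT s₀ t (Ne.symm hts))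
      rw [← hs₀]
      exact Finset.inf'_le _ ht
  -- Step 4: each event has probability 1/|A ∪ B|
  have hone : ∑ s ∈ A ∪ B, μ (J ⁻¹' Sset (A ∪ B) s) = 1 := by
    rw [← measure_biUnion_finset hdisj fun s _ => hEmeas s]
    refine le_antisymm prob_le_one ?_
    calc (1 : ℝ≥0∞) = μ Set.univ := (measure_univ (μ := μ)).symm
      _ ≤ μ ((⋃ s ∈ A ∪ B, J ⁻¹' Sset (A ∪ B) s) ∪ T) := measure_mono hcover
      _ ≤ μ (⋃ s ∈ A ∪ B, J ⁻¹' Sset (A ∪ B) s) + μ T := measure_union_le _ _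
      _ = μ (⋃ s ∈ A ∪ B, J ⁻¹' Sset (A ∪ B) s) := by rw [hTnull, add_zero]
  have hncard : ((A ∪ B).card : ℝ≥0∞) ≠ 0 := by
    simp [Finset.card_ne_zero_of_mem (hAB.choose_spec)]
  have hval : ∀ s ∈ A ∪ B, μ (J ⁻¹' Sset (A ∪ B) s) = ((A ∪ B).card : ℝ≥0∞)⁻¹ := by
    intro s hs
    have hsum : (1 : ℝ≥0∞) = ((A ∪ B).card : ℝ≥0∞) * μ (J ⁻¹' Sset (A ∪ B) s) := by
      rw [← hone, Finset.sum_congr rfl fun t ht => ?_]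
      · rw [Finset.sum_const, nsmul_eq_mul]
      · rw [hE, hE, pi_Sset_swap U (A ∪ B) ht hs]
    calc μ (J ⁻¹' Sset (A ∪ B) s)
        = ((A ∪ B).card : ℝ≥0∞)⁻¹ * (((A ∪ B).card : ℝ≥0∞) * μ (J ⁻¹' Sset (A ∪ B) s)) := by
          rw [← mul_assoc, ENNReal.inv_mul_cancel hncard (ENNReal.natCast_ne_top _), one_mul]
      _ = ((A ∪ B).card : ℝ≥0∞)⁻¹ := by rw [← hsum, mul_one]
  -- Step 5: the collision event agrees with the union over A ∩ B up to null sets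
  set Tgt : Set Ω := {ω | A.inf' hA (fun a => h a ω) = B.inf' hB (fun b => h b ω)} with hTgt
  have hsub1 : (⋃ s ∈ A ∩ B, J ⁻¹' Sset (A ∪ B) s) ⊆ Tgt := by
    intro ω hω
    obtain ⟨s, hsmem, hωE⟩ := Set.mem_iUnion₂.1 hω
    have hωE' := (hEmem s ω).1 hωE
    have key : ∀ (C : Finset ι) (hC : C.Nonempty), C ⊆ A ∪ B → s ∈ C →
        C.inf' hC (fun a => h a ω) = h s ω := by
      intro C hC hCsub hsC
      refine le_antisymm (Finset.inf'_le _ hsC) (Finset.le_inf' _ _ fun t ht => ?_)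
      rcases eq_or_ne t s with rfl | hts
      · exact le_refl _
      · exact (hωE' t (hCsub ht) hts).le
    have hsA : s ∈ A := (Finset.mem_inter.1 hsmem).1
    have hsB : s ∈ B := (Finset.mem_inter.1 hsmem).2
    show A.inf' hA (fun a => h a ω) = B.inf' hB (fun b => h b ω)
    rw [key A hA Finset.subset_union_left hsA, key B hB Finset.subset_union_right hsB]
  have hsub2 : Tgt ⊆ (⋃ s ∈ A ∩ B, J ⁻¹' Sset (A ∪ B) s) ∪ T := by
    intro ω hω
    by_cases hωT : ω ∈ T
    · exact Or.inr hωT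
    left
    have hnot := hTnot ω hωT
    obtain ⟨s₀, hs₀mem, hs₀⟩ := Finset.exists_mem_eq_inf' hAB (fun t => h t ω)
    have hmin : ∀ t ∈ A ∪ B, h s₀ ω ≤ h t ω := by
      intro t ht; rw [← hs₀]; exact Finset.inf'_le _ ht
    have hωeq : A.inf' hA (fun a => h a ω) = B.inf' hB (fun b => h b ω) := hω
    have hs₀AB : s₀ ∈ A ∩ B := by
      rcases Finset.mem_union.1 hs₀mem with hsA | hsB
      · refine Finset.mem_inter.2 ⟨hsA, ?_⟩
        by_contra hs₀B
        obtain ⟨b, hbB, hbinf⟩ := Finset.exists_mem_eq_inf' hB (fun t => h t ω)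
        have hbne : s₀ ≠ b := fun he => hs₀B (he ▸ hbB)
        have h1 : h s₀ ω ≤ h b ω := hmin b (Finset.mem_union_right _ hbB)
        have h2 : h b ω ≤ h s₀ ω := by
          rw [← hbinf, ← hωeq]
          exact Finset.inf'_le _ hsA
        exact hnot s₀ b hbne (le_antisymm h1 h2)
      · refine Finset.mem_inter.2 ⟨?_, hsB⟩
        by_contra hs₀A
        obtain ⟨a, haA, hainf⟩ := Finset.exists_mem_eq_inf' hA (fun t => h t ω)
        have hane : s₀ ≠ a := fun he => hs₀A (he ▸ haA)
        have h1 : h s₀ ω ≤ h a ω := hmin a (Finset.mem_union_left _ haA)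
        have h2 : h a ω ≤ h s₀ ω := by
          rw [← hainf, hωeq]
          exact Finset.inf'_le _ hsB
        exact hnot s₀ a hane (le_antisymm h1 h2)
    refine Set.mem_biUnion hs₀AB ((hEmem s₀ ω).2 fun t ht hts => ?_)
    exact lt_of_le_of_ne (hmin t ht) (hnot s₀ t (Ne.symm hts))
  -- Step 6: conclude
  have hμU : μ (⋃ s ∈ A ∩ B, J ⁻¹' Sset (A ∪ B) s)
      = ((A ∩ B).card : ℝ≥0∞) * ((A ∪ B).card : ℝ≥0∞)⁻¹ := by
    rw [measure_biUnion_finset (hdisj.subset (by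
      exact_mod_cast Finset.coe_subset.2 (Finset.inter_subset_union))) fun s _ => hEmeas s]
    rw [Finset.sum_congr rfl fun s hs => hval s (Finset.inter_subset_union hs)]
    rw [Finset.sum_const, nsmul_eq_mul]
  have hμTgt : μ Tgt = ((A ∩ B).card : ℝ≥0∞) * ((A ∪ B).card : ℝ≥0∞)⁻¹ := by
    rw [← hμU]
    refine le_antisymm ?_ (measure_mono hsub1)
    calc μ Tgt ≤ μ ((⋃ s ∈ A ∩ B, J ⁻¹' Sset (A ∪ B) s) ∪ T) := measure_mono hsub2
      _ ≤ μ (⋃ s ∈ A ∩ B, J ⁻¹' Sset (A ∪ B) s) + μ T := measure_union_le _ _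
      _ = μ (⋃ s ∈ A ∩ B, J ⁻¹' Sset (A ∪ B) s) := by rw [hTnull, add_zero]
  rw [hμTgt, ENNReal.toReal_mul, ENNReal.toReal_inv]
  simp [div_eq_mul_inv]
end

section
/- Let n, m ≥ 1 and r ∈ ℕ, set l = 2^r, and let X be the minimum of n independent uniform [0,1] random variables and Y the minimum of m independent uniform [0,1] random variables, with X and Y independent. Let RAY = { (x,y) ∈ [0,1]² : 0 < x ≤ l/(l+1), (l/(l+1))·x ≤ y ≤ ((l+1)/l)·x }. Then P( (X,Y) ∈ RAY ) ≤ ( (2l+1)(l+1)/l³ ) · nm/((n+m)(n+m−1)). -/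
open MeasureTheory ProbabilityTheory



section Aux

lemma vol_Ici_inter (t : ℝ) :
    volume (Set.Ici t ∩ Set.Icc (0:ℝ) 1) = ENNReal.ofReal (1 - max (min t 1) 0) := by
  rcases le_or_gt t 1 with h | h
  · have hs : Set.Ici t ∩ Set.Icc (0:ℝ) 1 = Set.Icc (max t 0) 1 := by
      ext x
      simp only [Set.mem_inter_iff, Set.mem_Ici, Set.mem_Icc, max_le_iff]
      tauto
    rw [hs, Real.volume_Icc, min_eq_left h]
  · have hs : Set.Ici t ∩ Set.Icc (0:ℝ) 1 = ∅ := by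
      ext x
      simp only [Set.mem_inter_iff, Set.mem_Ici, Set.mem_Icc, Set.mem_empty_iff_false, iff_false,
        not_and]
      intro h1 _ h3; linarith
    rw [hs, min_eq_right h.le]
    simp

lemma vol_Ioi_inter (t : ℝ) :
    volume (Set.Ioi t ∩ Set.Icc (0:ℝ) 1) = ENNReal.ofReal (1 - max (min t 1) 0) := by
  rcases lt_or_ge t 0 with h | h
  · have hs : Set.Ioi t ∩ Set.Icc (0:ℝ) 1 = Set.Icc 0 1 := by
      ext x
      simp only [Set.mem_inter_iff, Set.mem_Ioi, Set.mem_Icc, and_iff_right_iff_imp]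
      intro hx; linarith [hx.1]
    rw [hs, Real.volume_Icc, min_eq_left (by linarith), max_eq_right h.le]
  · rcases le_or_gt t 1 with h1 | h1
    · have hs : Set.Ioi t ∩ Set.Icc (0:ℝ) 1 = Set.Ioc t 1 := by
        ext x
        simp only [Set.mem_inter_iff, Set.mem_Ioi, Set.mem_Icc, Set.mem_Ioc]
        constructor
        · rintro ⟨ha, _, hc⟩; exact ⟨ha, hc⟩
        · rintro ⟨ha, hb⟩; exact ⟨ha, le_trans h ha.le, hb⟩
      rw [hs, Real.volume_Ioc, min_eq_left h1, max_eq_left h]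
    · have hs : Set.Ioi t ∩ Set.Icc (0:ℝ) 1 = ∅ := by
        ext x
        simp only [Set.mem_inter_iff, Set.mem_Ioi, Set.mem_Icc, Set.mem_empty_iff_false, iff_false,
          not_and]
        intro ha _ hc; linarith
      rw [hs, min_eq_right h1.le]
      simp

lemma min_tail {Ω ι : Type*} [MeasurableSpace Ω] [Fintype ι] (μ : Measure Ω)
    (u : ι → Ω → ℝ) (hmeas : ∀ s, Measurable (u s))
    (hindep : iIndepFun u μ)
    (hunif : ∀ s, Measure.map (u s) μ = volume.restrict (Set.Icc (0:ℝ) 1))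
    {k : ℕ} (e : Fin k ↪ ι) {A : Set ℝ} (hA : MeasurableSet A) {ρ : ℝ}
    (hvol : volume (A ∩ Set.Icc (0:ℝ) 1) = ENNReal.ofReal ρ) (hρ : 0 ≤ ρ) :
    μ (⋂ i : Fin k, u (e i) ⁻¹' A) = ENNReal.ofReal (ρ ^ k) := by
  classical
  have hsingle : ∀ s, μ (u s ⁻¹' A) = ENNReal.ofReal ρ := by
    intro s
    rw [← Measure.map_apply (hmeas s) hA, hunif s, Measure.restrict_apply hA, hvol]
  have h := hindep.measure_inter_preimage_eq_mul (S := Finset.univ.map e)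
    (sets := fun _ => A) (fun i _ => hA)
  have hset : (⋂ i ∈ Finset.univ.map e, u i ⁻¹' A) = ⋂ i : Fin k, u (e i) ⁻¹' A := by
    ext ω
    simp only [Set.mem_iInter, Finset.mem_map, Finset.mem_univ, true_and]
    constructor
    · intro hh j; exact hh (e j) ⟨j, rfl⟩
    · rintro hh i ⟨j, rfl⟩; exact hh j
  rw [hset] at h
  rw [h, Finset.prod_map]
  simp only [hsingle]
  rw [Finset.prod_const, Finset.card_univ, Fintype.card_fin, ← ENNReal.ofReal_pow hρ]

end Aux


lemma integral_pow_density (n : ℕ) (hn : 1 ≤ n) {a : ℝ} (_ha : a ≤ 1) :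
    ∫ x in a..1, (n:ℝ) * (1-x)^(n-1) = (1-a)^n := by
  have key : ∀ x ∈ Set.uIcc a 1, HasDerivAt (fun y : ℝ => -(1-y)^n) ((n:ℝ)*(1-x)^(n-1)) x := by
    intro x _
    have h1 : HasDerivAt (fun y : ℝ => 1 - y) (-1) x := (hasDerivAt_id x).const_sub 1
    have h2 := (h1.fun_pow n).fun_neg
    refine h2.congr_deriv ?_
    ring
  rw [intervalIntegral.integral_eq_sub_of_hasDerivAt key
    (Continuous.intervalIntegrable (by continuity) _ _)]
  have : (1:ℝ) - 1 = 0 := by norm_num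
  rw [this, zero_pow (by omega : n ≠ 0)]
  ring

lemma integral_x_pow (k : ℕ) {c : ℝ} (hc : 0 < c) :
    ∫ x in (0:ℝ)..(1/c), x * (1-c*x)^k = 1/(c^2*((k:ℝ)+1)*((k:ℝ)+2)) := by
  have hc0 : c ≠ 0 := hc.ne'
  have hk1 : ((k:ℝ)+1) ≠ 0 := by positivity
  have hk2 : ((k:ℝ)+2) ≠ 0 := by positivity
  have key : ∀ x ∈ Set.uIcc (0:ℝ) (1/c), HasDerivAt
      (fun y : ℝ => -(y/(c*((k:ℝ)+1))) * (1-c*y)^(k+1) - (1-c*y)^(k+2)/(c^2*((k:ℝ)+1)*((k:ℝ)+2)))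
      (x * (1-c*x)^k) x := by
    intro x _
    have h1 : HasDerivAt (fun y : ℝ => 1 - c*y) (-c) x := by
      simpa using (((hasDerivAt_id x).const_mul c).const_sub 1)
    have h2 := h1.fun_pow (k+1)
    have h3 := (h1.fun_pow (k+2)).div_const (c^2*((k:ℝ)+1)*((k:ℝ)+2))
    have h4 : HasDerivAt (fun y : ℝ => -(y/(c*((k:ℝ)+1)))) (-(1/(c*((k:ℝ)+1)))) x := by
      simpa using ((hasDerivAt_id x).div_const (c*((k:ℝ)+1))).fun_neg
    have h5 := (h4.fun_mul h2).fun_sub h3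
    refine h5.congr_deriv ?_
    push_cast
    field_simp
    ring
  rw [intervalIntegral.integral_eq_sub_of_hasDerivAt key
    (Continuous.intervalIntegrable (by continuity) _ _)]
  have hz : 1 - c * (1/c) = 0 := by field_simp; ring
  rw [hz, zero_pow (by omega : k+1 ≠ 0), zero_pow (by omega : k+2 ≠ 0)]
  norm_num

lemma pow_diff_le (m : ℕ) {A B D : ℝ} (hB : 0 ≤ B) (hBA : B ≤ A) (_hA1 : A ≤ 1)
    (hD : A - B = D) (hD0 : 0 ≤ D) :
    A^m - B^m ≤ (m:ℝ) * D * A^(m-1) := by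
  have h := geom_sum₂_mul A B m
  rw [← h, hD]
  have hA0 : 0 ≤ A := le_trans hB hBA
  have hsum : (∑ i ∈ Finset.range m, A^i * B^(m-1-i)) ≤ (m:ℝ) * A^(m-1) := by
    calc (∑ i ∈ Finset.range m, A^i * B^(m-1-i)) ≤ ∑ _i ∈ Finset.range m, A^(m-1) := by
          apply Finset.sum_le_sum
          intro i hi
          have hi' := Finset.mem_range.mp hi
          have h1 : A^i * B^(m-1-i) ≤ A^i * A^(m-1-i) :=
            mul_le_mul_of_nonneg_left (pow_le_pow_left₀ hB hBA _) (pow_nonneg hA0 i)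
          refine h1.trans ?_
          rw [← pow_add]
          have : i + (m-1-i) = m-1 := by omega
          rw [this]
      _ = (m:ℝ) * A^(m-1) := by
          rw [Finset.sum_const, Finset.card_range, nsmul_eq_mul]
  calc (∑ i ∈ Finset.range m, A^i * B^(m-1-i)) * D ≤ ((m:ℝ) * A^(m-1)) * D :=
        mul_le_mul_of_nonneg_right hsum hD0
    _ = (m:ℝ) * D * A^(m-1) := by ring


set_option maxHeartbeats 1000000 in
/-- **Probability mass of the ray from the origin** (Lemma `thm:ray`, sharp form):
with `l = 2^r` and `RAY = {(x,y) ∈ [0,1]² : 0 < x ≤ l/(l+1), (l/(l+1))x ≤ y ≤ ((l+1)/l)x}`,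
`P((X,Y) ∈ RAY) ≤ ((2l+1)(l+1)/l³) · nm/((n+m)(n+m−1))`. -/
theorem hyperminhash_ray_mass_sharp
    {Ω : Type*} [MeasurableSpace Ω] (μ : Measure Ω) [IsProbabilityMeasure μ]
    (r : ℕ) (n m : ℕ) (hn : 1 ≤ n) (hm : 1 ≤ m)
    (u : Fin n ⊕ Fin m → Ω → ℝ)
    (hmeas : ∀ s, Measurable (u s))
    (hindep : iIndepFun u μ)
    (hunif : ∀ s, Measure.map (u s) μ = volume.restrict (Set.Icc (0 : ℝ) 1))
    (X Y : Ω → ℝ)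
    (hX : X = fun ω => ⨅ i : Fin n, u (Sum.inl i) ω)
    (hY : Y = fun ω => ⨅ j : Fin m, u (Sum.inr j) ω)
    (l : ℝ) (hl : l = 2 ^ r)
    (RAY : Set (ℝ × ℝ))
    (hRAY : RAY = {xy : ℝ × ℝ | xy.1 ∈ Set.Icc (0 : ℝ) 1 ∧ xy.2 ∈ Set.Icc (0 : ℝ) 1
      ∧ 0 < xy.1 ∧ xy.1 ≤ l / (l + 1)
      ∧ l / (l + 1) * xy.1 ≤ xy.2 ∧ xy.2 ≤ (l + 1) / l * xy.1}) :
    (μ {ω | (X ω, Y ω) ∈ RAY}).toReal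
      ≤ (2 * l + 1) * (l + 1) / l ^ 3
          * ((n : ℝ) * m / (((n : ℝ) + m) * ((n : ℝ) + m - 1))) := by
  classical
  haveI : Nonempty (Fin n) := ⟨⟨0, hn⟩⟩
  haveI : Nonempty (Fin m) := ⟨⟨0, hm⟩⟩
  have hl0 : (0:ℝ) < l := by rw [hl]; positivity
  have hl1' : (1:ℝ) ≤ l := by rw [hl]; exact one_le_pow₀ (by norm_num)
  have hl1 : (0:ℝ) < l + 1 := by linarith
  set c : ℝ := l / (l + 1) with hcdef
  set C : ℝ := (l + 1) / l with hCdef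
  have hc0 : 0 < c := by positivity
  have hc1 : c ≤ 1 := by rw [hcdef, div_le_one hl1]; linarith
  have hcC : c * C = 1 := by rw [hcdef, hCdef]; field_simp
  have hC1c : C = 1 / c := eq_one_div_of_mul_eq_one_right hcC
  have hC0 : 0 < C := by rw [hCdef]; positivity
  have hcleC : c ≤ C := by
    rw [hC1c]
    calc c ≤ 1 := hc1
      _ ≤ 1 / c := by
          rw [le_div_iff₀ hc0, one_mul]
          exact hc1
  -- measurability
  have hXm : Measurable X := by rw [hX]; exact Measurable.iInf fun i => hmeas _
  have hYm : Measurable Y := by rw [hY]; exact Measurable.iInf fun j => hmeas _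
  have hRAYm : MeasurableSet RAY := by
    rw [hRAY]
    simp only [Set.setOf_and]
    refine MeasurableSet.inter (measurable_fst measurableSet_Icc)
      (MeasurableSet.inter (measurable_snd measurableSet_Icc)
        (MeasurableSet.inter (measurableSet_lt measurable_const measurable_fst)
          (MeasurableSet.inter (measurableSet_le measurable_fst measurable_const)
            (MeasurableSet.inter (measurableSet_le (measurable_fst.const_mul _) measurable_snd)
              (measurableSet_le measurable_snd (measurable_fst.const_mul _))))))
  -- independence of X and Y
  have hXYindep : IndepFun X Y μ := by
    rw [hX, hY]
    let S : Finset (Fin n ⊕ Fin m) := Finset.univ.map ⟨Sum.inl, Sum.inl_injective⟩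
    let T : Finset (Fin n ⊕ Fin m) := Finset.univ.map ⟨Sum.inr, Sum.inr_injective⟩
    have hST : Disjoint S T := by
      simp [Finset.disjoint_left, S, T]
    have hmem1 : ∀ i : Fin n, (Sum.inl i : Fin n ⊕ Fin m) ∈ S := by
      intro i; simp [S]
    have hmem2 : ∀ j : Fin m, (Sum.inr j : Fin n ⊕ Fin m) ∈ T := by
      intro j; simp [T]
    have h := hindep.indepFun_finset S T hST hmeas
    exact h.comp (φ := fun v : S → ℝ => ⨅ i : Fin n, v ⟨Sum.inl i, hmem1 i⟩)
      (ψ := fun v : T → ℝ => ⨅ j : Fin m, v ⟨Sum.inr j, hmem2 j⟩)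
      (Measurable.iInf fun i => measurable_pi_apply _)
      (Measurable.iInf fun j => measurable_pi_apply _)
  -- survival functions
  have hXIci : ∀ t : ℝ, μ.map X (Set.Ici t) = ENNReal.ofReal ((1 - max (min t 1) 0)^n) := by
    intro t
    rw [Measure.map_apply hXm measurableSet_Ici]
    have hpre : X ⁻¹' Set.Ici t = ⋂ i : Fin n, u (Sum.inl i) ⁻¹' Set.Ici t := by
      ext ω
      simp only [hX, Set.mem_preimage, Set.mem_Ici, Set.mem_iInter]
      exact le_ciInf_iff (Set.finite_range _).bddBelow
    rw [hpre]
    exact min_tail μ u hmeas hindep hunif ⟨Sum.inl, Sum.inl_injective⟩ measurableSet_Ici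
      (vol_Ici_inter t)
      (by have := max_le (min_le_right t 1) (zero_le_one (α := ℝ)); linarith)
  have hYIci : ∀ t : ℝ, μ.map Y (Set.Ici t) = ENNReal.ofReal ((1 - max (min t 1) 0)^m) := by
    intro t
    rw [Measure.map_apply hYm measurableSet_Ici]
    have hpre : Y ⁻¹' Set.Ici t = ⋂ j : Fin m, u (Sum.inr j) ⁻¹' Set.Ici t := by
      ext ω
      simp only [hY, Set.mem_preimage, Set.mem_Ici, Set.mem_iInter]
      exact le_ciInf_iff (Set.finite_range _).bddBelow
    rw [hpre]
    exact min_tail μ u hmeas hindep hunif ⟨Sum.inr, Sum.inr_injective⟩ measurableSet_Ici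
      (vol_Ici_inter t)
      (by have := max_le (min_le_right t 1) (zero_le_one (α := ℝ)); linarith)
  have hYIoi : ∀ t : ℝ, μ.map Y (Set.Ioi t) = ENNReal.ofReal ((1 - max (min t 1) 0)^m) := by
    intro t
    rw [Measure.map_apply hYm measurableSet_Ioi]
    have hpre : Y ⁻¹' Set.Ioi t = ⋂ j : Fin m, u (Sum.inr j) ⁻¹' Set.Ioi t := by
      ext ω
      simp only [hY, Set.mem_preimage, Set.mem_Ioi, Set.mem_iInter]
      constructor
      · intro h j
        exact lt_of_lt_of_le h (ciInf_le (Set.finite_range _).bddBelow j)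
      · intro h
        obtain ⟨j₀, hj₀⟩ := Finite.exists_min (fun j => u (Sum.inr j) ω)
        exact lt_of_lt_of_le (h j₀) (le_ciInf hj₀)
    rw [hpre]
    exact min_tail μ u hmeas hindep hunif ⟨Sum.inr, Sum.inr_injective⟩ measurableSet_Ioi
      (vol_Ioi_inter t)
      (by have := max_le (min_le_right t 1) (zero_le_one (α := ℝ)); linarith)
  -- law of X as a density measure
  set f : ℝ → ENNReal :=
    fun x => (Set.Icc (0:ℝ) 1).indicator (fun x => ENNReal.ofReal ((n:ℝ) * (1-x)^(n-1))) x
    with hfdef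
  have hfm : Measurable f :=
    (Measurable.ennreal_ofReal
      (measurable_const.mul ((measurable_const.sub measurable_id).pow_const _))).indicator
      measurableSet_Icc
  haveI : IsProbabilityMeasure (μ.map X) := Measure.isProbabilityMeasure_map hXm.aemeasurable
  haveI : IsProbabilityMeasure (μ.map Y) := Measure.isProbabilityMeasure_map hYm.aemeasurable
  have hνX : μ.map X = volume.withDensity f := by
    refine Measure.ext_of_Ici (μ.map X) _ (fun t => ?_)
    rw [hXIci t, withDensity_apply _ measurableSet_Ici, hfdef]
    rw [lintegral_indicator measurableSet_Icc, Measure.restrict_restrict measurableSet_Icc]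
    rcases le_or_gt t 1 with h | h
    · have hset : Set.Icc (0:ℝ) 1 ∩ Set.Ici t = Set.Icc (max t 0) 1 := by
        ext x
        simp only [Set.mem_inter_iff, Set.mem_Icc, Set.mem_Ici, max_le_iff]
        tauto
      rw [hset]
      have ha1 : max t 0 ≤ 1 := max_le h zero_le_one
      rw [← ofReal_integral_eq_lintegral_ofReal]
      · rw [integral_Icc_eq_integral_Ioc, ← intervalIntegral.integral_of_le ha1,
          integral_pow_density n hn ha1, min_eq_left h]
      · exact Continuous.integrableOn_Icc
          (continuous_const.mul ((continuous_const.sub continuous_id).pow (n-1)))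
      · filter_upwards [ae_restrict_mem measurableSet_Icc] with x hx
        have h1x : (0:ℝ) ≤ 1 - x := by linarith [hx.2]
        positivity
    · have hset : Set.Icc (0:ℝ) 1 ∩ Set.Ici t = ∅ := by
        ext x
        simp only [Set.mem_inter_iff, Set.mem_Icc, Set.mem_Ici, Set.mem_empty_iff_false,
          iff_false, not_and]
        intro h1 h2; linarith [h1.2]
      rw [hset, min_eq_right h.le, max_eq_left zero_le_one]
      simp [zero_pow (by omega : n ≠ 0)]
  -- joint law
  have hjoint : μ.map (fun ω => (X ω, Y ω)) = (μ.map X).prod (μ.map Y) :=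
    (indepFun_iff_map_prod_eq_prod_map_map hXm.aemeasurable hYm.aemeasurable).mp hXYindep
  have hμE : μ {ω | (X ω, Y ω) ∈ RAY} = ((μ.map X).prod (μ.map Y)) RAY := by
    rw [← hjoint, Measure.map_apply (hXm.prodMk hYm) hRAYm]
    rfl
  -- slice bound
  have hslice : ∀ x : ℝ, (μ.map Y) (Prod.mk x ⁻¹' RAY) ≤
      (Set.Ioc (0:ℝ) c).indicator
        (fun x => ENNReal.ofReal ((m:ℝ) * ((C - c) * x) * (1 - c*x)^(m-1))) x := by
    intro x
    by_cases hx : x ∈ Set.Ioc (0:ℝ) c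
    · rw [Set.indicator_of_mem hx]
      obtain ⟨hx0, hxc⟩ := hx
      have hsub : Prod.mk x ⁻¹' RAY ⊆ Set.Icc (c*x) (C*x) := by
        intro y hy
        rw [hRAY] at hy
        simp only [Set.mem_preimage, Set.mem_setOf_eq] at hy
        rw [Set.mem_Icc]
        exact ⟨hy.2.2.2.2.1, hy.2.2.2.2.2⟩
      refine le_trans (measure_mono hsub) ?_
      have hp0 : (0:ℝ) ≤ c*x := by positivity
      have hq1 : C*x ≤ 1 := by
        calc C*x ≤ C*c := mul_le_mul_of_nonneg_left hxc hC0.le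
          _ = 1 := by rw [mul_comm]; exact hcC
      have hpq : c*x ≤ C*x := mul_le_mul_of_nonneg_right hcleC hx0.le
      have hp1 : c*x ≤ 1 := le_trans hpq hq1
      have hq0 : (0:ℝ) ≤ C*x := le_trans hp0 hpq
      have hB0 : (0:ℝ) ≤ 1 - C*x := by linarith
      have hIcc : Set.Icc (c*x) (C*x) = Set.Ici (c*x) \ Set.Ioi (C*x) := by
        ext y
        simp only [Set.mem_Icc, Set.mem_diff, Set.mem_Ici, Set.mem_Ioi, not_lt]
      have hdiff := measure_diff (μ := μ.map Y)
        (Set.Ioi_subset_Ici_self.trans (Set.Ici_subset_Ici.mpr hpq))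
        measurableSet_Ioi.nullMeasurableSet (measure_ne_top _ _)
      rw [hIcc, hdiff, hYIci, hYIoi, min_eq_left hp1, max_eq_left hp0, min_eq_left hq1, max_eq_left hq0,
        ← ENNReal.ofReal_sub _ (pow_nonneg hB0 m)]
      apply ENNReal.ofReal_le_ofReal
      exact pow_diff_le m (A := 1 - c*x) (B := 1 - C*x) (D := (C-c)*x)
        hB0 (by linarith) (by linarith) (by ring)
        (mul_nonneg (by linarith) hx0.le)
    · rw [Set.indicator_of_notMem hx]
      have hempty : Prod.mk x ⁻¹' RAY = ∅ := by
        ext y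
        rw [hRAY]
        simp only [Set.mem_preimage, Set.mem_setOf_eq, Set.mem_empty_iff_false, iff_false]
        intro hy
        exact hx ⟨hy.2.2.1, hy.2.2.2.1⟩
      rw [hempty]
      simp
  -- the numeric exponent
  set k : ℕ := n + m - 2 with hkdef
  have hnm1 : (0:ℝ) < (n:ℝ) + m - 1 := by
    have h1 : (1:ℝ) ≤ (n:ℝ) := by exact_mod_cast hn
    have h2 : (1:ℝ) ≤ (m:ℝ) := by exact_mod_cast hm
    linarith
  have hnm0 : (0:ℝ) < (n:ℝ) + m := by linarith
  have hVcast1 : ((k:ℝ)+1) = (n:ℝ) + m - 1 := by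
    have h2 : 2 ≤ n + m := by omega
    rw [hkdef]
    push_cast [Nat.cast_sub h2]
    ring
  have hVcast2 : ((k:ℝ)+2) = (n:ℝ) + m := by linarith [hVcast1]
  have hgm : Measurable (fun x : ℝ => (Set.Ioc (0:ℝ) c).indicator
      (fun x => ENNReal.ofReal ((m:ℝ) * ((C - c) * x) * (1 - c*x)^(m-1))) x) :=
    (Measurable.ennreal_ofReal (by fun_prop)).indicator measurableSet_Ioc
  have hptwise : ∀ x : ℝ, f x * (Set.Ioc (0:ℝ) c).indicator
      (fun x => ENNReal.ofReal ((m:ℝ) * ((C - c) * x) * (1 - c*x)^(m-1))) x ≤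
      (Set.Ioc (0:ℝ) C).indicator
        (fun x => ENNReal.ofReal ((n:ℝ) * m * (C-c) * (x * (1 - c*x)^k))) x := by
    intro x
    by_cases hx : x ∈ Set.Ioc (0:ℝ) c
    · rw [Set.indicator_of_mem hx,
        Set.indicator_of_mem (show x ∈ Set.Ioc (0:ℝ) C from ⟨hx.1, le_trans hx.2 hcleC⟩)]
      obtain ⟨hx0, hxc⟩ := hx
      have hx1 : x ≤ 1 := le_trans hxc hc1
      simp only [hfdef]
      rw [Set.indicator_of_mem (show x ∈ Set.Icc (0:ℝ) 1 from ⟨hx0.le, hx1⟩)]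
      have hcx : c * x ≤ x := mul_le_of_le_one_left hx0.le hc1
      have h1x : (0:ℝ) ≤ 1 - x := by linarith
      rw [← ENNReal.ofReal_mul (mul_nonneg (Nat.cast_nonneg n) (pow_nonneg h1x _))]
      apply ENNReal.ofReal_le_ofReal
      have hmono : (1-x)^(n-1) ≤ (1-c*x)^(n-1) := pow_le_pow_left₀ h1x (by linarith) _
      have h1cx : (0:ℝ) ≤ 1 - c*x := by linarith
      have hCc0 : (0:ℝ) ≤ C - c := by linarith
      have hrest : (0:ℝ) ≤ (m:ℝ) * ((C - c) * x) * (1 - c*x)^(m-1) :=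
        mul_nonneg (mul_nonneg (Nat.cast_nonneg m) (mul_nonneg hCc0 hx0.le))
          (pow_nonneg h1cx _)
      calc (n:ℝ) * (1-x)^(n-1) * ((m:ℝ) * ((C - c) * x) * (1 - c*x)^(m-1))
          ≤ (n:ℝ) * (1-c*x)^(n-1) * ((m:ℝ) * ((C - c) * x) * (1 - c*x)^(m-1)) := by
            exact mul_le_mul_of_nonneg_right
              (mul_le_mul_of_nonneg_left hmono (Nat.cast_nonneg n)) hrest
        _ = (n:ℝ) * m * (C-c) * (x * (1 - c*x)^k) := by
            rw [hkdef, show n + m - 2 = (n-1) + (m-1) by omega, pow_add]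
            ring
    · rw [Set.indicator_of_notMem hx, mul_zero]
      exact zero_le
  have hInt : ∫⁻ x, (Set.Ioc (0:ℝ) C).indicator
        (fun x => ENNReal.ofReal ((n:ℝ) * m * (C-c) * (x * (1 - c*x)^k))) x ∂volume
      = ENNReal.ofReal ((n:ℝ) * m * (C-c) * (1/(c^2*((k:ℝ)+1)*((k:ℝ)+2)))) := by
    rw [lintegral_indicator measurableSet_Ioc]
    rw [← ofReal_integral_eq_lintegral_ofReal]
    · rw [← intervalIntegral.integral_of_le hC0.le, intervalIntegral.integral_const_mul,
        hC1c, integral_x_pow k hc0]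
    · refine (Continuous.integrableOn_Icc (a := (0:ℝ)) (b := C) ?_).mono_set
        Set.Ioc_subset_Icc_self
      exact continuous_const.mul
        (continuous_id.mul ((continuous_const.sub (continuous_const.mul continuous_id)).pow k))
    · filter_upwards [ae_restrict_mem measurableSet_Ioc] with x hx
      have h1 : (0:ℝ) < x := hx.1
      have h2 : (0:ℝ) ≤ 1 - c*x := by
        have h4 : c*x ≤ c*C := mul_le_mul_of_nonneg_left hx.2 hc0.le
        rw [hcC] at h4
        linarith
      have h3 : (0:ℝ) ≤ C - c := by linarith
      positivity
  have hmain : ((μ.map X).prod (μ.map Y)) RAY ≤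
      ENNReal.ofReal ((n:ℝ) * m * (C-c) * (1/(c^2*((k:ℝ)+1)*((k:ℝ)+2)))) := by
    rw [Measure.prod_apply hRAYm]
    calc ∫⁻ x, (μ.map Y) (Prod.mk x ⁻¹' RAY) ∂(μ.map X)
        ≤ ∫⁻ x, (Set.Ioc (0:ℝ) c).indicator
            (fun x => ENNReal.ofReal ((m:ℝ) * ((C - c) * x) * (1 - c*x)^(m-1))) x ∂(μ.map X) :=
          lintegral_mono hslice
      _ = ∫⁻ x, f x * (Set.Ioc (0:ℝ) c).indicator
            (fun x => ENNReal.ofReal ((m:ℝ) * ((C - c) * x) * (1 - c*x)^(m-1))) x ∂volume := by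
          rw [hνX, lintegral_withDensity_eq_lintegral_mul volume hfm hgm]
          exact lintegral_congr fun x => rfl
      _ ≤ ∫⁻ x, (Set.Ioc (0:ℝ) C).indicator
            (fun x => ENNReal.ofReal ((n:ℝ) * m * (C-c) * (x * (1 - c*x)^k))) x ∂volume :=
          lintegral_mono hptwise
      _ = _ := hInt
  -- wrap up
  rw [hμE]
  have hval : (n:ℝ) * m * (C-c) * (1/(c^2*((k:ℝ)+1)*((k:ℝ)+2)))
      = (2 * l + 1) * (l + 1) / l ^ 3 * ((n : ℝ) * m / (((n : ℝ) + m) * ((n : ℝ) + m - 1))) := by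
    have e1 : l ≠ 0 := hl0.ne'
    have e2 : l + 1 ≠ 0 := hl1.ne'
    have e3 : (n:ℝ) + m ≠ 0 := hnm0.ne'
    have e4 : (n:ℝ) + m - 1 ≠ 0 := hnm1.ne'
    rw [hVcast1, hVcast2, hcdef, hCdef]
    field_simp
    ring
  rw [hval] at hmain
  have hd : (0:ℝ) ≤ ((n:ℝ)+m) * ((n:ℝ)+m-1) := mul_nonneg hnm0.le hnm1.le
  exact ENNReal.toReal_le_of_le_ofReal
    (mul_nonneg (by positivity) (div_nonneg (by positivity) hd)) hmain
end

section
/- Let n, m ≥ 1 and r ∈ ℕ, set l = 2^r, and let X be the minimum of n independent uniform [0,1] random variables and Y the minimum of m independent uniform [0,1] random variables, with X and Y independent. Let RAY = { (x,y) ∈ [0,1]² : 0 < x ≤ l/(l+1), (l/(l+1))·x ≤ y ≤ ((l+1)/l)·x }. Then P( (X,Y) ∈ RAY ) ≤ 3/2^r. -/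
open MeasureTheory ProbabilityTheory Finset

lemma hm_pow_sub_pow_le (m : ℕ) {p q : ℝ} (hq : 0 ≤ q) (hpq : q ≤ p) (hp : p ≤ 1) :
    p ^ m - q ^ m ≤ m * p ^ (m - 1) * (p - q) := by
  have hp0 : 0 ≤ p := hq.trans hpq
  rw [← geom_sum₂_mul p q m]
  have hsum : (∑ i ∈ range m, p ^ i * q ^ (m - 1 - i)) ≤ m * p ^ (m - 1) := by
    calc (∑ i ∈ range m, p ^ i * q ^ (m - 1 - i))
        ≤ ∑ i ∈ range m, p ^ (m - 1) := by
          refine Finset.sum_le_sum fun i hi => ?_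
          calc p ^ i * q ^ (m - 1 - i) ≤ p ^ i * p ^ (m - 1 - i) := by
                exact mul_le_mul_of_nonneg_left (pow_le_pow_left₀ hq hpq _) (pow_nonneg hp0 _)
            _ = p ^ (m - 1) := by
                rw [← pow_add]; congr 1
                have := Finset.mem_range.mp hi; omega
      _ = m * p ^ (m - 1) := by simp [Finset.sum_const, nsmul_eq_mul]
  exact mul_le_mul_of_nonneg_right hsum (by linarith)

lemma hm_mul_tail_le_one (m : ℕ) {t : ℝ} (ht0 : 0 ≤ t) (ht1 : t ≤ 1) :
    m * t * (1 - t) ^ (m - 1) ≤ 1 := by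
  have h : (1:ℝ) ^ m - (1 - t) ^ m ≥ m * (1 - t) ^ (m - 1) * (1 - (1 - t)) := by
    rw [← geom_sum₂_mul 1 (1 - t) m]
    have hsum : (m : ℝ) * (1 - t) ^ (m - 1) ≤ ∑ i ∈ range m, 1 ^ i * (1 - t) ^ (m - 1 - i) := by
      calc (m : ℝ) * (1 - t) ^ (m - 1) = ∑ _i ∈ range m, (1 - t) ^ (m - 1) := by
            simp [Finset.sum_const, nsmul_eq_mul]
        _ ≤ ∑ i ∈ range m, 1 ^ i * (1 - t) ^ (m - 1 - i) := by
            refine Finset.sum_le_sum fun i hi => ?_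
            rw [one_pow, one_mul]
            exact pow_le_pow_of_le_one (by linarith) (by linarith) (by omega)
    exact mul_le_mul_of_nonneg_right hsum (by linarith)
  have h2 : (0:ℝ) ≤ (1 - t) ^ m := pow_nonneg (by linarith) m
  simp only [one_pow] at h
  nlinarith [h]

lemma hm_slice_core (m : ℕ) {l x : ℝ} (hl : 1 ≤ l) (hx : 0 < x) (hxc : x ≤ l / (l + 1)) :
    (1 - l / (l + 1) * x) ^ m - (1 - min ((l + 1) / l * x) 1) ^ m ≤ 3 / l := by
  have hl0 : (0:ℝ) < l := by linarith
  have hl1 : (0:ℝ) < l + 1 := by linarith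
  have hc0 : (0:ℝ) < l / (l + 1) := div_pos hl0 hl1
  have hc1 : l / (l + 1) ≤ 1 := by rw [div_le_one hl1]; linarith
  have hcb : l / (l + 1) ≤ (l + 1) / l := by rw [div_le_div_iff₀ hl1 hl0]; nlinarith
  have ha0 : 0 ≤ l / (l + 1) * x := by positivity
  have ha1 : l / (l + 1) * x ≤ 1 := by nlinarith
  have hB1 : min ((l + 1) / l * x) 1 ≤ 1 := min_le_right _ _
  have haB : l / (l + 1) * x ≤ min ((l + 1) / l * x) 1 := le_min (by nlinarith) ha1
  have h1 := hm_pow_sub_pow_le m (q := 1 - min ((l + 1) / l * x) 1)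
      (p := 1 - l / (l + 1) * x) (by linarith) (by linarith) (by linarith)
  have h2 := hm_mul_tail_le_one m ha0 ha1
  have hM : 0 ≤ (m:ℝ) * (1 - l / (l + 1) * x) ^ (m - 1) :=
    mul_nonneg (Nat.cast_nonneg m) (pow_nonneg (by linarith) _)
  have hMx : (m:ℝ) * (1 - l / (l + 1) * x) ^ (m - 1) * x ≤ (l + 1) / l := by
    rw [le_div_iff₀ hl0]
    have e : (m:ℝ) * (l / (l + 1) * x) * (1 - l / (l + 1) * x) ^ (m - 1) * (l + 1)
        = m * (1 - l / (l + 1) * x) ^ (m - 1) * x * l := by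
      field_simp
    nlinarith [h2]
  have hdiff : min ((l + 1) / l * x) 1 - l / (l + 1) * x
      ≤ ((l + 1) / l - l / (l + 1)) * x := by
    have := min_le_left ((l + 1) / l * x) 1
    nlinarith [this]
  have hlast : (l + 1) / l * ((l + 1) / l - l / (l + 1)) ≤ 3 / l := by
    rw [div_sub_div _ _ hl0.ne' hl1.ne', div_mul_div_comm,
      div_le_div_iff₀ (by positivity) hl0]
    nlinarith
  calc (1 - l / (l + 1) * x) ^ m - (1 - min ((l + 1) / l * x) 1) ^ m
      ≤ (m:ℝ) * (1 - l / (l + 1) * x) ^ (m - 1)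
        * ((1 - l / (l + 1) * x) - (1 - min ((l + 1) / l * x) 1)) := h1
    _ ≤ (m:ℝ) * (1 - l / (l + 1) * x) ^ (m - 1) * (((l + 1) / l - l / (l + 1)) * x) := by
        refine mul_le_mul_of_nonneg_left ?_ hM
        linarith [hdiff]
    _ = ((m:ℝ) * (1 - l / (l + 1) * x) ^ (m - 1) * x) * ((l + 1) / l - l / (l + 1)) := by ring
    _ ≤ (l + 1) / l * ((l + 1) / l - l / (l + 1)) := by
        exact mul_le_mul_of_nonneg_right hMx (by linarith)
    _ ≤ 3 / l := hlast

/-- **Probability mass of the ray from the origin** (Lemma `thm:ray`):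
with `l = 2^r` and `RAY = {(x,y) ∈ [0,1]² : 0 < x ≤ l/(l+1), (l/(l+1))x ≤ y ≤ ((l+1)/l)x}`,
`P((X,Y) ∈ RAY) ≤ 3/2^r`. -/
theorem hyperminhash_ray_mass
    {Ω : Type*} [MeasurableSpace Ω] (μ : Measure Ω) [IsProbabilityMeasure μ]
    (r : ℕ) (n m : ℕ) (hn : 1 ≤ n) (hm : 1 ≤ m)
    (u : Fin n ⊕ Fin m → Ω → ℝ)
    (hmeas : ∀ s, Measurable (u s))
    (hindep : iIndepFun u μ)
    (hunif : ∀ s, Measure.map (u s) μ = volume.restrict (Set.Icc (0 : ℝ) 1))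
    (X Y : Ω → ℝ)
    (hX : X = fun ω => ⨅ i : Fin n, u (Sum.inl i) ω)
    (hY : Y = fun ω => ⨅ j : Fin m, u (Sum.inr j) ω)
    (l : ℝ) (hl : l = 2 ^ r)
    (RAY : Set (ℝ × ℝ))
    (hRAY : RAY = {xy : ℝ × ℝ | xy.1 ∈ Set.Icc (0 : ℝ) 1 ∧ xy.2 ∈ Set.Icc (0 : ℝ) 1
      ∧ 0 < xy.1 ∧ xy.1 ≤ l / (l + 1)
      ∧ l / (l + 1) * xy.1 ≤ xy.2 ∧ xy.2 ≤ (l + 1) / l * xy.1}) :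
    (μ {ω | (X ω, Y ω) ∈ RAY}).toReal ≤ 3 / 2 ^ r := by
  have hnne : Nonempty (Fin n) := ⟨⟨0, hn⟩⟩
  have hmne : Nonempty (Fin m) := ⟨⟨0, hm⟩⟩
  have hl1 : (1:ℝ) ≤ l := by rw [hl]; exact one_le_pow₀ one_le_two
  have hl0 : (0:ℝ) < l := by linarith
  have hXm : Measurable X := by rw [hX]; exact Measurable.iInf fun i => hmeas _
  have hYm : Measurable Y := by rw [hY]; exact Measurable.iInf fun j => hmeas _
  -- single-variable facts
  have husingle : ∀ s, ∀ t : ℝ, 0 ≤ t → t ≤ 1 →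
      μ (u s ⁻¹' Set.Ici t) = ENNReal.ofReal (1 - t) := by
    intro s t ht0 ht1
    rw [← Measure.map_apply (hmeas s) measurableSet_Ici, hunif s,
      Measure.restrict_apply measurableSet_Ici]
    have hset : Set.Ici t ∩ Set.Icc 0 1 = Set.Icc t 1 := by
      ext z
      simp only [Set.mem_inter_iff, Set.mem_Ici, Set.mem_Icc]
      exact ⟨fun h => ⟨h.1, h.2.2⟩, fun h => ⟨h.1, ht0.trans h.1, h.2⟩⟩
    rw [hset, Real.volume_Icc]
  have hatom : ∀ s, ∀ b : ℝ, μ (u s ⁻¹' {b}) = 0 := by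
    intro s b
    rw [← Measure.map_apply (hmeas s) (measurableSet_singleton b), hunif s,
      Measure.restrict_apply (measurableSet_singleton b)]
    exact measure_mono_null Set.inter_subset_left (Real.volume_singleton)
  -- law of Y
  set ν : Measure ℝ := μ.map Y with hν
  have hνprob : IsProbabilityMeasure ν := Measure.isProbabilityMeasure_map hYm.aemeasurable
  have htail : ∀ t : ℝ, 0 ≤ t → t ≤ 1 → ν (Set.Ici t) = ENNReal.ofReal ((1 - t) ^ m) := by
    intro t ht0 ht1
    rw [hν, Measure.map_apply hYm measurableSet_Ici]
    have hpre : Y ⁻¹' Set.Ici t = ⋂ j : Fin m, u (Sum.inr j) ⁻¹' Set.Ici t := by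
      ext ω
      simp only [Set.mem_preimage, Set.mem_Ici, Set.mem_iInter, hY]
      exact le_ciInf_iff (Set.finite_range _).bddBelow
    rw [hpre]
    have hbi : (⋂ j : Fin m, u (Sum.inr j) ⁻¹' Set.Ici t)
        = ⋂ s ∈ (Finset.univ.map ⟨Sum.inr, Sum.inr_injective⟩ :
            Finset (Fin n ⊕ Fin m)), u s ⁻¹' Set.Ici t := by
      ext ω; simp
    rw [hbi, hindep.measure_inter_preimage_eq_mul
      (Finset.univ.map ⟨Sum.inr, Sum.inr_injective⟩)
      (sets := fun _ => Set.Ici t) (fun _ _ => measurableSet_Ici)]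
    rw [Finset.prod_map]
    simp only [Function.Embedding.coeFn_mk]
    rw [Finset.prod_congr rfl (fun j _ => husingle (Sum.inr j) t ht0 ht1),
      Finset.prod_const, Finset.card_univ, Fintype.card_fin,
      ← ENNReal.ofReal_pow (by linarith)]
  have hνatom : ∀ b : ℝ, ν {b} = 0 := by
    intro b
    rw [hν, Measure.map_apply hYm (measurableSet_singleton b)]
    have hsub : Y ⁻¹' {b} ⊆ ⋃ j : Fin m, u (Sum.inr j) ⁻¹' {b} := by
      intro ω hω
      simp only [Set.mem_preimage, Set.mem_singleton_iff] at hω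
      obtain ⟨j, hj⟩ := exists_eq_ciInf_of_finite (f := fun j : Fin m => u (Sum.inr j) ω)
      exact Set.mem_iUnion.mpr ⟨j, by rw [hY] at hω; simp [hj, hω]⟩
    refine measure_mono_null hsub (measure_iUnion_null fun j => hatom _ b)
  have hIcc : ∀ a b : ℝ, 0 ≤ a → a ≤ b → b ≤ 1 →
      ν (Set.Icc a b) ≤ ENNReal.ofReal ((1 - a) ^ m - (1 - b) ^ m) := by
    intro a b ha0 hab hb1
    have hIoi : ν (Set.Ioi b) = ν (Set.Ici b) := by
      refine le_antisymm (measure_mono Set.Ioi_subset_Ici_self) ?_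
      calc ν (Set.Ici b) = ν (Set.Ioi b ∪ {b}) := by rw [Set.Ioi_union_left]
        _ ≤ ν (Set.Ioi b) + ν {b} := measure_union_le _ _
        _ = ν (Set.Ioi b) := by rw [hνatom b, add_zero]
    have hsplit : ν (Set.Icc a b) + ν (Set.Ioi b) = ν (Set.Ici a) := by
      rw [← measure_union (by
          exact Set.disjoint_left.mpr fun x hx hx' => absurd hx.2 (not_le.mpr hx'))
        measurableSet_Ioi, Set.Icc_union_Ioi_eq_Ici hab]
    rw [hIoi, htail b (ha0.trans hab) hb1, htail a ha0 (hab.trans hb1)] at hsplit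
    have : ν (Set.Icc a b) = ENNReal.ofReal ((1 - a) ^ m) - ENNReal.ofReal ((1 - b) ^ m) := by
      rw [← hsplit, ENNReal.add_sub_cancel_right ENNReal.ofReal_ne_top]
    rw [this, ← ENNReal.ofReal_sub _ (pow_nonneg (by linarith) m)]
  -- independence of X and Y
  classical
  have hInd : IndepFun X Y μ := by
    have hmemS : ∀ i : Fin n, Sum.inl i ∈
        (Finset.univ.map ⟨Sum.inl, Sum.inl_injective⟩ : Finset (Fin n ⊕ Fin m)) :=
      fun i => Finset.mem_map_of_mem _ (Finset.mem_univ i)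
    have hmemT : ∀ j : Fin m, Sum.inr j ∈
        (Finset.univ.map ⟨Sum.inr, Sum.inr_injective⟩ : Finset (Fin n ⊕ Fin m)) :=
      fun j => Finset.mem_map_of_mem _ (Finset.mem_univ j)
    have hST : Disjoint
        (Finset.univ.map ⟨Sum.inl, Sum.inl_injective⟩ : Finset (Fin n ⊕ Fin m))
        (Finset.univ.map ⟨Sum.inr, Sum.inr_injective⟩ : Finset (Fin n ⊕ Fin m)) := by
      rw [Finset.disjoint_left]
      rintro a ha hb
      simp only [Finset.mem_map, Finset.mem_univ, true_and,
        Function.Embedding.coeFn_mk] at ha hb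
      obtain ⟨i, rfl⟩ := ha
      obtain ⟨j, hj⟩ := hb
      cases hj
    have h0 := hindep.indepFun_finset _ _ hST hmeas
    have hφ : Measurable fun v : {s // s ∈
        (Finset.univ.map ⟨Sum.inl, Sum.inl_injective⟩ : Finset (Fin n ⊕ Fin m))} → ℝ =>
        ⨅ i : Fin n, v ⟨Sum.inl i, hmemS i⟩ :=
      Measurable.iInf fun i => measurable_pi_apply _
    have hψ : Measurable fun v : {s // s ∈
        (Finset.univ.map ⟨Sum.inr, Sum.inr_injective⟩ : Finset (Fin n ⊕ Fin m))} → ℝ =>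
        ⨅ j : Fin m, v ⟨Sum.inr j, hmemT j⟩ :=
      Measurable.iInf fun j => measurable_pi_apply _
    have h1 := h0.comp hφ hψ
    rw [hX, hY]
    exact h1
  -- slice bound
  have hslice : ∀ x : ℝ, ν (Prod.mk x ⁻¹' RAY) ≤ ENNReal.ofReal (3 / l) := by
    intro x
    by_cases hx : 0 < x ∧ x ≤ l / (l + 1)
    · obtain ⟨hx0, hxc⟩ := hx
      have hsub : Prod.mk x ⁻¹' RAY
          ⊆ Set.Icc (l / (l + 1) * x) (min ((l + 1) / l * x) 1) := by
        intro y hy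
        simp only [hRAY, Set.mem_preimage, Set.mem_setOf_eq, Set.mem_Icc] at hy
        obtain ⟨_, ⟨hy0, hy1⟩, _, _, h5, h6⟩ := hy
        exact ⟨h5, le_min h6 hy1⟩
      have hc0 : (0:ℝ) < l / (l + 1) := div_pos hl0 (by linarith)
      have hc1 : l / (l + 1) ≤ 1 := by rw [div_le_one (by linarith)]; linarith
      have ha1 : l / (l + 1) * x ≤ 1 := by nlinarith
      have hcb : l / (l + 1) ≤ (l + 1) / l := by
        rw [div_le_div_iff₀ (by linarith) hl0]; nlinarith
      calc ν (Prod.mk x ⁻¹' RAY)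
          ≤ ν (Set.Icc (l / (l + 1) * x) (min ((l + 1) / l * x) 1)) := measure_mono hsub
        _ ≤ ENNReal.ofReal ((1 - l / (l + 1) * x) ^ m - (1 - min ((l + 1) / l * x) 1) ^ m) :=
            hIcc _ _ (by positivity) (le_min (by nlinarith) ha1) (min_le_right _ _)
        _ ≤ ENNReal.ofReal (3 / l) :=
            ENNReal.ofReal_le_ofReal (hm_slice_core m hl1 hx0 hxc)
    · have hempty : Prod.mk x ⁻¹' RAY = ∅ := by
        ext y
        simp only [hRAY, Set.mem_preimage, Set.mem_setOf_eq, Set.mem_empty_iff_false,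
          iff_false, not_and]
        intro _ _ h3 h4
        exact absurd ⟨h3, h4⟩ hx
      simp [hempty]
  -- assembly
  have hRAYmeas : MeasurableSet RAY := by
    rw [hRAY]
    simp only [Set.mem_Icc, Set.setOf_and]
    repeat' apply MeasurableSet.inter
    all_goals first
      | exact measurableSet_lt measurable_const measurable_fst
      | exact measurableSet_le measurable_const measurable_fst
      | exact measurableSet_le measurable_fst measurable_const
      | exact measurableSet_le (measurable_const.mul measurable_fst) measurable_snd
      | exact measurableSet_le measurable_snd (measurable_const.mul measurable_fst)
      | exact measurableSet_le measurable_const measurable_snd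
      | exact measurableSet_le measurable_snd measurable_const
  have hpair : μ {ω | (X ω, Y ω) ∈ RAY} = ((μ.map X).prod ν) RAY := by
    rw [← (indepFun_iff_map_prod_eq_prod_map_map hXm.aemeasurable hYm.aemeasurable).mp hInd,
      Measure.map_apply (hXm.prodMk hYm) hRAYmeas]
    rfl
  haveI := hνprob
  haveI : IsProbabilityMeasure (μ.map X) := Measure.isProbabilityMeasure_map hXm.aemeasurable
  have hbound : μ {ω | (X ω, Y ω) ∈ RAY} ≤ ENNReal.ofReal (3 / l) := by
    rw [hpair, Measure.prod_apply hRAYmeas]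
    calc ∫⁻ x, ν (Prod.mk x ⁻¹' RAY) ∂(μ.map X)
        ≤ ∫⁻ _x, ENNReal.ofReal (3 / l) ∂(μ.map X) := lintegral_mono fun x => hslice x
      _ = ENNReal.ofReal (3 / l) := by rw [lintegral_const, measure_univ, mul_one]
  calc (μ {ω | (X ω, Y ω) ∈ RAY}).toReal
      ≤ (ENNReal.ofReal (3 / l)).toReal :=
        ENNReal.toReal_mono ENNReal.ofReal_ne_top hbound
    _ = 3 / l := ENNReal.toReal_ofReal (by positivity)
    _ = 3 / 2 ^ r := by rw [hl]
end

section
/- Let n, m, q, r ∈ ℕ with 1 ≤ m ≤ n ≤ 2^{2^q + r}. Define ρ_q(x) = min(⌊−log₂ x⌋ + 1, 2^q) for x ∈ (0,1], σ_r(x) = ⌊x·2^r⌋, and ĥ_{q,r}(x) = ( ρ_q(x), σ_r( x·2^{ρ_q(x)} − 1 ) ). Let X be the minimum of n independent uniform [0,1] random variables and Y the minimum of m independent uniform [0,1] random variables, with X and Y independent. Then the single-bucket collision probability satisfies P( ĥ_{q,r}(X) = ĥ_{q,r}(Y) ) ≤ 6/2^r + n/2^{2^q + r}. -/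
open MeasureTheory ProbabilityTheory

/-- `ρ_q(x) = min(⌊−log₂ x⌋ + 1, 2^q)`, the truncated position of the leading 1 bit. -/
noncomputable def rhoHMH (q : ℕ) (x : ℝ) : ℤ :=
  min (⌊-Real.logb 2 x⌋ + 1) (2 ^ q)

/-- `σ_r(x) = ⌊x·2^r⌋`, the next `r` bits. -/
noncomputable def sigmaHMH (r : ℕ) (x : ℝ) : ℤ :=
  ⌊x * 2 ^ r⌋

/-- The HyperMinHash bucket encoding `ĥ_{q,r}(x) = (ρ_q(x), σ_r(x·2^{ρ_q(x)} − 1))`. -/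
noncomputable def hatHMH (q r : ℕ) (x : ℝ) : ℤ × ℤ :=
  (rhoHMH q x, sigmaHMH r (x * (2 : ℝ) ^ rhoHMH q x - 1))

open Finset in
lemma kk_nonneg (k : ℕ) : (0:ℝ) ≤ (k:ℝ) * ((k:ℝ)-1) := by
  rcases Nat.eq_zero_or_pos k with h | h
  · simp [h]
  · have : (1:ℝ) ≤ (k:ℝ) := by exact_mod_cast h
    nlinarith
lemma quadBern (x : ℝ) (hx : 0 ≤ x) : ∀ m : ℕ, 1 + m*x + (m*(m-1)/2)*x^2 ≤ (1+x)^m := by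
  intro m
  induction m with
  | zero => norm_num
  | succ k ih =>
    have h0 := kk_nonneg k
    have h1 : (0:ℝ) ≤ 1 + k*x + (k*(k-1)/2)*x^2 := by positivity
    have h2 : (1 + k*x + (k*(k-1)/2)*x^2) * (1+x) ≤ (1+x)^(k+1) := by
      rw [pow_succ]
      exact mul_le_mul_of_nonneg_right ih (by linarith)
    push_cast
    nlinarith [pow_nonneg hx 2, mul_nonneg (mul_nonneg h0 hx) (mul_nonneg hx hx)]
lemma claim2 {m : ℕ} (hm : 1 ≤ m) {x : ℝ} (hx0 : 0 < x) (hx1 : x ≤ 1) :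
    (1-x)^m ≤ 2/((m:ℝ)*x)^2 := by
  have hm1 : (1:ℝ) ≤ (m:ℝ) := by exact_mod_cast hm
  have hq := quadBern x hx0.le m
  have hpos : (0:ℝ) < ((m:ℝ)*x)^2 := by positivity
  have hxx : (0:ℝ) ≤ (m:ℝ) * (x - x^2) :=
    mul_nonneg (by positivity) (by nlinarith [mul_nonneg hx0.le (by linarith : (0:ℝ) ≤ 1 - x)])
  have h2 : ((m:ℝ)*x)^2/2 ≤ (1+x)^m := by nlinarith
  have h3 : (1-x)^m * (1+x)^m ≤ 1 := by
    rw [← mul_pow]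
    have : (1-x)*(1+x) = 1 - x^2 := by ring
    rw [this]
    exact pow_le_one₀ (by nlinarith) (by nlinarith)
  have h4 : (0:ℝ) ≤ (1-x)^m := pow_nonneg (by linarith) m
  rw [le_div_iff₀ hpos]
  nlinarith [mul_le_mul_of_nonneg_left h2 h4]

open Finset in
lemma geomHalfSum (M : ℕ) : ∑ i ∈ Finset.range M, ((1:ℝ)/2)^i ≤ 2 := by
  rw [geom_sum_eq (by norm_num : (1:ℝ)/2 ≠ 1)]
  have h : (0:ℝ) ≤ ((1:ℝ)/2)^M := by positivity
  have h2 : ((1:ℝ)/2)^M ≤ 1 := pow_le_one₀ (by norm_num) (by norm_num)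
  rw [div_le_iff_of_neg (by norm_num : ((1:ℝ)/2 - 1) < 0)]
  linarith
lemma geomTwoSum (M : ℕ) : ∑ i ∈ Finset.range M, (2:ℝ)^i = 2^M - 1 := by
  rw [geom_sum_eq (by norm_num : (2:ℝ) ≠ 1)]
  norm_num
lemma sumBound (m : ℕ) (hm : 1 ≤ m) (N : ℕ) :
    ∑ k ∈ Finset.Icc 1 N, (m:ℝ) * (1/2)^k * (1 - (1/2)^k)^m ≤ 6 := by
  set k0 := Nat.clog 2 m with hk0def
  have hmk0 : (m:ℝ) ≤ 2^k0 := by exact_mod_cast Nat.le_pow_clog (by norm_num) m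
  have h2k0 : (2:ℝ)^k0 ≤ 2*m := by
    rcases Nat.lt_or_ge m 2 with h | h
    · interval_cases m
      · simp [hk0def, Nat.clog]
    · have h1 : 2^(k0-1) < m := Nat.pow_pred_clog_lt_self (by norm_num) h
      have hk01 : 1 ≤ k0 := Nat.clog_pos (by norm_num) h
      have : (2:ℕ)^k0 ≤ 2*m := by
        calc (2:ℕ)^k0 = 2*2^(k0-1) := by
              rw [← pow_succ']
              congr 1
              omega
        _ ≤ 2*m := by omega
      exact_mod_cast this
  have hterm : ∀ k ∈ Finset.Icc 1 N, (m:ℝ) * (1/2)^k * (1 - (1/2)^k)^m ≤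
      (if k < k0 then (2:ℝ)*2^k/(m:ℝ) else (m:ℝ)*(1/2)^k) := by
    intro k hk
    have hx0 : (0:ℝ) < (1/2)^k := by positivity
    have hx1 : ((1:ℝ)/2)^k ≤ 1 := pow_le_one₀ (by norm_num) (by norm_num)
    have hmpos : (0:ℝ) < m := by exact_mod_cast hm
    split_ifs with h
    · have hc := claim2 hm hx0 hx1
      have : (m:ℝ) * (1/2)^k * (1 - (1/2)^k)^m ≤ (m:ℝ) * (1/2)^k * (2/((m:ℝ)*(1/2)^k)^2) :=
        mul_le_mul_of_nonneg_left hc (by positivity)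
      refine this.trans (le_of_eq ?_)
      have hne : ((1:ℝ)/2)^k ≠ 0 := ne_of_gt hx0
      field_simp
      ring_nf
      rw [← mul_pow]; norm_num
    · have h2 : (1 - (1/2:ℝ)^k)^m ≤ 1 := pow_le_one₀ (by linarith) (by linarith)
      nlinarith [mul_pos hmpos hx0]
  calc ∑ k ∈ Finset.Icc 1 N, (m:ℝ) * (1/2)^k * (1 - (1/2)^k)^m
      ≤ ∑ k ∈ Finset.Icc 1 N, (if k < k0 then (2:ℝ)*2^k/(m:ℝ) else (m:ℝ)*(1/2)^k) :=
        Finset.sum_le_sum hterm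
    _ = ∑ k ∈ (Finset.Icc 1 N).filter (· < k0), 2*2^k/(m:ℝ)
        + ∑ k ∈ (Finset.Icc 1 N).filter (fun k => ¬ k < k0), (m:ℝ)*(1/2)^k := by
        rw [Finset.sum_ite]
    _ ≤ 4 + 2 := by
        gcongr ?_ + ?_
        · have hsub : (Finset.Icc 1 N).filter (· < k0) ⊆ Finset.range k0 := by
            intro k hk
            simp only [Finset.mem_filter, Finset.mem_range] at *
            exact hk.2
          have hmpos : (0:ℝ) < m := by exact_mod_cast hm
          calc ∑ k ∈ (Finset.Icc 1 N).filter (· < k0), 2*2^k/(m:ℝ)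
              ≤ ∑ k ∈ Finset.range k0, 2*2^k/(m:ℝ) :=
                Finset.sum_le_sum_of_subset_of_nonneg hsub (fun i _ _ => by positivity)
            _ = (2/m) * ∑ k ∈ Finset.range k0, (2:ℝ)^k := by
                rw [Finset.mul_sum]
                exact Finset.sum_congr rfl (fun k _ => by ring)
            _ = (2/m) * (2^k0 - 1) := by rw [geomTwoSum]
            _ ≤ (2/m) * (2*m) :=
                mul_le_mul_of_nonneg_left (by linarith) (by positivity)
            _ = 4 := by field_simp; ring
        · have hsub : (Finset.Icc 1 N).filter (fun k => ¬ k < k0) ⊆ Finset.Icc k0 N := by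
            intro k hk
            simp only [Finset.mem_filter, Finset.mem_Icc] at *
            omega
          calc ∑ k ∈ (Finset.Icc 1 N).filter (fun k => ¬ k < k0), (m:ℝ)*(1/2)^k
              ≤ ∑ k ∈ Finset.Icc k0 N, (m:ℝ)*(1/2)^k :=
                Finset.sum_le_sum_of_subset_of_nonneg hsub (fun i _ _ => by positivity)
            _ = ∑ i ∈ Finset.range (N+1-k0), (m:ℝ)*(1/2)^(k0+i) := by
                rw [← Finset.Ico_add_one_right_eq_Icc, Finset.sum_Ico_eq_sum_range]
            _ = (m:ℝ)*(1/2)^k0 * ∑ i ∈ Finset.range (N+1-k0), (1/2:ℝ)^i := by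
                rw [Finset.mul_sum]
                exact Finset.sum_congr rfl (fun i _ => by rw [pow_add]; ring)
            _ ≤ (m:ℝ)*(1/2)^k0 * 2 := by
                have hmpos : (0:ℝ) < m := by exact_mod_cast hm
                exact mul_le_mul_of_nonneg_left (geomHalfSum _) (by positivity)
            _ ≤ 2 := by
                have h2 : (0:ℝ) < 2^k0 := by positivity
                have : (m:ℝ)*(1/2)^k0 ≤ 1 := by
                  rw [one_div, inv_pow, mul_inv_le_iff₀ h2, one_mul]
                  exact hmk0
                linarith
    _ = 6 := by norm_num

lemma rho_ge_one (q : ℕ) {x : ℝ} (hx0 : 0 < x) (hx1 : x ≤ 1) : 1 ≤ rhoHMH q x := by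
  have h1 : Real.logb 2 x ≤ 0 := Real.logb_nonpos (by norm_num) hx0.le hx1
  have h2 : (0:ℤ) ≤ ⌊-Real.logb 2 x⌋ := Int.floor_nonneg.mpr (by linarith)
  have hq : (1:ℤ) ≤ 2^q := by exact_mod_cast Nat.one_le_two_pow
  exact le_min (by omega) hq

lemma rho_le (q : ℕ) (x : ℝ) : rhoHMH q x ≤ 2 ^ q := min_le_right _ _

lemma x_mul_le_two (q : ℕ) {x : ℝ} (hx0 : 0 < x) : x * (2:ℝ) ^ (rhoHMH q x) ≤ 2 := by
  have h1 : rhoHMH q x - 1 ≤ ⌊-Real.logb 2 x⌋ := by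
    have := min_le_left (⌊-Real.logb 2 x⌋ + 1) ((2:ℤ) ^ q)
    unfold rhoHMH
    omega
  have h2 : ((rhoHMH q x : ℝ) - 1) ≤ -Real.logb 2 x := by
    calc ((rhoHMH q x : ℝ) - 1) = ((rhoHMH q x - 1 : ℤ) : ℝ) := by push_cast; ring
    _ ≤ (⌊-Real.logb 2 x⌋ : ℝ) := by exact_mod_cast h1
    _ ≤ -Real.logb 2 x := Int.floor_le _
  have h3 : Real.logb 2 x ≤ ((1 - rhoHMH q x : ℤ) : ℝ) := by push_cast; linarith
  have h4 : x ≤ (2:ℝ) ^ ((1 - rhoHMH q x : ℤ) : ℝ) :=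
    (Real.logb_le_iff_le_rpow (by norm_num) hx0).mp h3
  rw [Real.rpow_intCast] at h4
  have h5 : (0:ℝ) < (2:ℝ) ^ (rhoHMH q x) := by positivity
  calc x * (2:ℝ) ^ (rhoHMH q x) ≤ (2:ℝ) ^ (1 - rhoHMH q x) * (2:ℝ) ^ (rhoHMH q x) :=
        mul_le_mul_of_nonneg_right h4 h5.le
    _ = 2 := by
        rw [← zpow_add₀ (by norm_num : (2:ℝ) ≠ 0)]
        norm_num

lemma gt_of_rho_lt (q : ℕ) {x : ℝ} {k : ℤ} (hx0 : 0 < x) (hk : k < 2 ^ q)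
    (hrho : rhoHMH q x = k) : (2:ℝ) ^ (-k) < x := by
  have h1 : ⌊-Real.logb 2 x⌋ + 1 = k := by
    unfold rhoHMH at hrho
    omega
  have h2 : -Real.logb 2 x < k := by
    have := Int.lt_floor_add_one (-Real.logb 2 x)
    calc -Real.logb 2 x < (⌊-Real.logb 2 x⌋ : ℝ) + 1 := this
    _ = ((⌊-Real.logb 2 x⌋ + 1 : ℤ) : ℝ) := by push_cast; ring
    _ = (k : ℝ) := by exact_mod_cast h1
  have h3 : ((-k : ℤ) : ℝ) < Real.logb 2 x := by push_cast; linarith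
  have h4 : (2:ℝ) ^ ((-k : ℤ) : ℝ) < x :=
    (Real.lt_logb_iff_rpow_lt (by norm_num) hx0).mp h3
  rwa [Real.rpow_intCast] at h4

lemma sigma_bounds (q r : ℕ) {x : ℝ} (hx0 : 0 < x) (hx1 : x ≤ 1) :
    -(2^r : ℤ) ≤ (hatHMH q r x).2 ∧ (hatHMH q r x).2 ≤ 2^r := by
  have hy1 : x * (2:ℝ) ^ (rhoHMH q x) ≤ 2 := x_mul_le_two q hx0
  have hy0 : 0 < x * (2:ℝ) ^ (rhoHMH q x) := by positivity
  have hr0 : (0:ℝ) < 2^r := by positivity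
  constructor
  · show -(2^r : ℤ) ≤ sigmaHMH r _
    rw [sigmaHMH]
    apply Int.le_floor.mpr
    push_cast
    nlinarith
  · show sigmaHMH r _ ≤ (2^r : ℤ)
    rw [sigmaHMH]
    have : (x * (2:ℝ) ^ (rhoHMH q x) - 1) * 2^r ≤ ((2^r : ℤ) : ℝ) := by push_cast; nlinarith
    calc ⌊(x * (2:ℝ) ^ (rhoHMH q x) - 1) * 2^r⌋ ≤ ⌊((2^r : ℤ) : ℝ)⌋ := Int.floor_le_floor this
    _ = (2^r : ℤ) := Int.floor_intCast _

lemma hat_interval (q r : ℕ) {x : ℝ} {k j : ℤ} (hhat : hatHMH q r x = (k, j)) :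
    x ∈ Set.Ico ((1 + (j:ℝ)/2^r) * ((2:ℝ)^k)⁻¹)
      ((1 + (j:ℝ)/2^r) * ((2:ℝ)^k)⁻¹ + ((2:ℝ)^k)⁻¹/2^r) := by
  have hrho : rhoHMH q x = k := congrArg Prod.fst hhat
  have hsig : sigmaHMH r (x * (2:ℝ) ^ rhoHMH q x - 1) = j := congrArg Prod.snd hhat
  rw [hrho] at hsig
  rw [sigmaHMH, Int.floor_eq_iff] at hsig
  obtain ⟨h1, h2⟩ := hsig
  have hP : (0:ℝ) < (2:ℝ)^k := by positivity
  have hR : (0:ℝ) < (2:ℝ)^r := by positivity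
  constructor
  · have e1 : (j:ℝ)/2^r ≤ x*2^k - 1 := (div_le_iff₀ hR).mpr (by linarith)
    calc (1 + (j:ℝ)/2^r) * ((2:ℝ)^k)⁻¹ ≤ x * 2^k * ((2:ℝ)^k)⁻¹ :=
          mul_le_mul_of_nonneg_right (by linarith) (inv_nonneg.mpr hP.le)
    _ = x := by field_simp
  · have e2 : x*2^k - 1 < ((j:ℝ)+1)/2^r := (lt_div_iff₀ hR).mpr (by linarith)
    have key : x * 2^k < 1 + (j:ℝ)/2^r + 1/2^r := by
      have hd : ((j:ℝ)+1)/2^r = (j:ℝ)/2^r + 1/2^r := by ring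
      rw [hd] at e2
      linarith
    calc x = x*2^k*((2:ℝ)^k)⁻¹ := by field_simp
    _ < (1 + (j:ℝ)/2^r + 1/2^r) * ((2:ℝ)^k)⁻¹ := by
        exact mul_lt_mul_of_pos_right key (inv_pos.mpr hP)
    _ = (1 + (j:ℝ)/2^r) * ((2:ℝ)^k)⁻¹ + ((2:ℝ)^k)⁻¹/2^r := by ring

lemma measurable_rhoHMH (q : ℕ) : Measurable (rhoHMH q) := by
  unfold rhoHMH
  have h1 : Measurable (fun x : ℝ => -Real.logb 2 x) := by
    unfold Real.logb
    exact (Real.measurable_log.div_const _).neg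
  exact ((h1.floor.add measurable_const).min measurable_const)

lemma measurable_hatHMH (q r : ℕ) : Measurable (hatHMH q r) := by
  unfold hatHMH
  have h1 := measurable_rhoHMH q
  have h2 : Measurable (fun x : ℝ => x * (2:ℝ) ^ rhoHMH q x - 1) := by
    have : Measurable (fun x : ℝ => (2:ℝ) ^ rhoHMH q x) :=
      (measurable_of_countable (fun z : ℤ => (2:ℝ)^z)).comp h1
    exact (measurable_id.mul this).sub measurable_const
  refine h1.prodMk ?_
  unfold sigmaHMH
  exact (h2.mul_const _).floor

/-- **Single-bucket HyperMinHash collision bound** (Proposition `thm:gamma`):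
for `1 ≤ m ≤ n ≤ 2^{2^q + r}`,
`P(ĥ_{q,r}(X) = ĥ_{q,r}(Y)) ≤ 6/2^r + n/2^{2^q + r}`. -/
theorem hyperminhash_single_bucket_collision_bound
    {Ω : Type*} [MeasurableSpace Ω] (μ : Measure Ω) [IsProbabilityMeasure μ]
    (q r : ℕ) (n m : ℕ) (hm : 1 ≤ m) (hmn : m ≤ n) (hnb : n ≤ 2 ^ (2 ^ q + r))
    (u : Fin n ⊕ Fin m → Ω → ℝ)
    (hmeas : ∀ s, Measurable (u s))
    (hindep : iIndepFun u μ)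
    (hunif : ∀ s, Measure.map (u s) μ = volume.restrict (Set.Icc (0 : ℝ) 1))
    (X Y : Ω → ℝ)
    (hX : X = fun ω => ⨅ i : Fin n, u (Sum.inl i) ω)
    (hY : Y = fun ω => ⨅ j : Fin m, u (Sum.inr j) ω) :
    (μ {ω | hatHMH q r (X ω) = hatHMH q r (Y ω)}).toReal
      ≤ 6 / 2 ^ r + (n : ℝ) / 2 ^ (2 ^ q + r) := by
  classical
  subst hX
  subst hY
  have hn1 : 1 ≤ n := le_trans hm hmn
  haveI : NeZero n := ⟨by omega⟩
  haveI : NeZero m := ⟨by omega⟩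
  set X : Ω → ℝ := fun ω => ⨅ i : Fin n, u (Sum.inl i) ω with hX
  set Y : Ω → ℝ := fun ω => ⨅ j : Fin m, u (Sum.inr j) ω with hY
  -- uniform marginal evaluation
  have huval : ∀ s (S : Set ℝ), MeasurableSet S → μ (u s ⁻¹' S) = volume (S ∩ Set.Icc 0 1) := by
    intro s S hS
    rw [← Measure.map_apply (hmeas s) hS, hunif s, Measure.restrict_apply hS]
  -- Y union bound
  have hYS : ∀ S : Set ℝ, MeasurableSet S → μ (Y ⁻¹' S) ≤ m * volume (S ∩ Set.Icc 0 1) := by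
    intro S hS
    have hsub : Y ⁻¹' S ⊆ ⋃ j : Fin m, u (Sum.inr j) ⁻¹' S := by
      intro ω hω
      obtain ⟨j0, hj0⟩ := exists_eq_ciInf_of_finite (f := fun j : Fin m => u (Sum.inr j) ω)
      exact Set.mem_iUnion.mpr ⟨j0, by rw [Set.mem_preimage, hj0]; exact hω⟩
    calc μ (Y ⁻¹' S) ≤ ∑ j : Fin m, μ (u (Sum.inr j) ⁻¹' S) :=
          le_trans (measure_mono hsub) (measure_iUnion_fintype_le μ _)
      _ = m * volume (S ∩ Set.Icc 0 1) := by
          rw [Finset.sum_congr rfl (fun j _ => huval (Sum.inr j) S hS), Finset.sum_const,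
            Finset.card_univ, Fintype.card_fin, nsmul_eq_mul]
  -- X tail bound
  have hXtail : ∀ a : ℝ, 0 ≤ a → a ≤ 1 →
      μ (X ⁻¹' Set.Ici a) ≤ ENNReal.ofReal ((1-a)^m) := by
    intro a ha0 ha1
    set S : Finset (Fin n ⊕ Fin m) :=
      Finset.image (fun i : Fin m => Sum.inl (Fin.castLE hmn i)) Finset.univ with hSdef
    have hinj : Function.Injective
        (fun i : Fin m => (Sum.inl (Fin.castLE hmn i) : Fin n ⊕ Fin m)) :=
      fun a b h => Fin.castLE_injective hmn (Sum.inl.inj h)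
    have hsub : X ⁻¹' Set.Ici a ⊆ ⋂ s ∈ S, u s ⁻¹' Set.Ici a := by
      intro ω hω
      refine Set.mem_iInter₂.mpr (fun s hs => ?_)
      obtain ⟨i, _, rfl⟩ := Finset.mem_image.mp hs
      have hb : BddBelow (Set.range (fun i : Fin n => u (Sum.inl i) ω)) :=
        (Set.finite_range _).bddBelow
      have : X ω ≤ u (Sum.inl (Fin.castLE hmn i)) ω := ciInf_le hb _
      exact le_trans hω this
    have hprod := hindep.measure_inter_preimage_eq_mul S
      (sets := fun _ => Set.Ici a) (fun i _ => measurableSet_Ici)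
    have hval : ∀ s, μ (u s ⁻¹' Set.Ici a) = ENNReal.ofReal (1-a) := by
      intro s
      rw [huval s _ measurableSet_Ici]
      have : Set.Ici a ∩ Set.Icc (0:ℝ) 1 = Set.Icc a 1 := by
        ext y
        simp only [Set.mem_inter_iff, Set.mem_Ici, Set.mem_Icc]
        constructor
        · rintro ⟨h1, _, h3⟩; exact ⟨h1, h3⟩
        · rintro ⟨h1, h2⟩; exact ⟨h1, le_trans ha0 h1, h2⟩
      rw [this, Real.volume_Icc]
    have hcard : S.card = m := by
      rw [hSdef, Finset.card_image_of_injective _ hinj, Finset.card_univ, Fintype.card_fin]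
    calc μ (X ⁻¹' Set.Ici a) ≤ μ (⋂ s ∈ S, u s ⁻¹' Set.Ici a) := measure_mono hsub
      _ = ∏ s ∈ S, μ (u s ⁻¹' Set.Ici a) := hprod
      _ = ENNReal.ofReal (1-a) ^ m := by
          rw [Finset.prod_congr rfl (fun s _ => hval s), Finset.prod_const, hcard]
      _ = ENNReal.ofReal ((1-a)^m) := (ENNReal.ofReal_pow (by linarith) m).symm
  -- independence of X and Y
  have hindepXY : IndepFun X Y μ := by
    set S1 : Finset (Fin n ⊕ Fin m) := Finset.image Sum.inl Finset.univ with hS1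
    set T1 : Finset (Fin n ⊕ Fin m) := Finset.image Sum.inr Finset.univ with hT1
    have hdisj : Disjoint S1 T1 := by
      rw [Finset.disjoint_left]
      intro a ha hb
      simp [hS1, hT1] at ha hb
      obtain ⟨i, rfl⟩ := ha
      obtain ⟨j, hj⟩ := hb
      exact Sum.inl_ne_inr hj.symm
    have hbase := hindep.indepFun_finset S1 T1 hdisj hmeas
    have hφ : Measurable
        (fun v : ({x // x ∈ S1} → ℝ) => ⨅ i : Fin n, v ⟨Sum.inl i, by simp [hS1]⟩) :=
      Measurable.iInf (fun i => measurable_pi_apply _)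
    have hψ : Measurable
        (fun v : ({x // x ∈ T1} → ℝ) => ⨅ j : Fin m, v ⟨Sum.inr j, by simp [hT1]⟩) :=
      Measurable.iInf (fun j => measurable_pi_apply _)
    exact hbase.comp hφ hψ
  have hXmeas : Measurable X := Measurable.iInf (fun i => hmeas _)
  have hprodXY : ∀ A B : Set ℝ, MeasurableSet A → MeasurableSet B →
      μ (X ⁻¹' A ∩ Y ⁻¹' B) = μ (X ⁻¹' A) * μ (Y ⁻¹' B) :=
    fun A B hA hB => hindepXY.measure_inter_preimage_eq_mul A B hA hB
  -- the a.s. event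
  set E : Set Ω := ⋂ s, u s ⁻¹' Set.Ioc (0:ℝ) 1 with hE
  have hEc : μ Eᶜ = 0 := by
    rw [hE, Set.compl_iInter]
    refine le_antisymm (le_trans (measure_iUnion_le _) ?_) zero_le
    have hz : ∀ s : Fin n ⊕ Fin m, μ ((u s ⁻¹' Set.Ioc 0 1)ᶜ) = 0 := by
      intro s
      rw [← Set.preimage_compl, huval s _ measurableSet_Ioc.compl]
      have hset : (Set.Ioc (0:ℝ) 1)ᶜ ∩ Set.Icc 0 1 = {0} := by
        ext y
        simp only [Set.mem_inter_iff, Set.mem_compl_iff, Set.mem_Ioc, Set.mem_Icc,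
          Set.mem_singleton_iff, not_and_or, not_lt, not_le]
        constructor
        · rintro ⟨h1 | h1, h2, h3⟩ <;> linarith
        · rintro rfl; exact ⟨Or.inl le_rfl, le_rfl, by norm_num⟩
      rw [hset]
      simp
    simp [hz]
  have hXY_Ioc : ∀ ω ∈ E, X ω ∈ Set.Ioc (0:ℝ) 1 ∧ Y ω ∈ Set.Ioc (0:ℝ) 1 := by
    intro ω hω
    have hall : ∀ s, u s ω ∈ Set.Ioc (0:ℝ) 1 := fun s => Set.mem_iInter.mp hω s
    constructor
    · obtain ⟨i0, hi0⟩ := exists_eq_ciInf_of_finite (f := fun i : Fin n => u (Sum.inl i) ω)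
      have hXeq : X ω = u (Sum.inl i0) ω := hi0.symm
      rw [hXeq]; exact hall _
    · obtain ⟨j0, hj0⟩ := exists_eq_ciInf_of_finite (f := fun j : Fin m => u (Sum.inr j) ω)
      have hYeq : Y ω = u (Sum.inr j0) ω := hj0.symm
      rw [hYeq]; exact hall _
  -- main decomposition
  set K : ℤ := (2:ℤ)^q with hK
  have hK1 : 1 ≤ K := by rw [hK]; exact_mod_cast Nat.one_le_two_pow
  set J : Finset ℤ := Finset.Icc (-(2^r : ℤ)) (2^r) with hJ
  set H : ℤ × ℤ → Set ℝ := fun p => hatHMH q r ⁻¹' {p} ∩ Set.Ioc 0 1 with hH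
  have hHmeas : ∀ p, MeasurableSet (H p) :=
    fun p => ((measurable_hatHMH q r) (measurableSet_singleton p)).inter measurableSet_Ioc
  set P : Finset (ℤ × ℤ) := Finset.Icc 1 K ×ˢ J with hP
  have hcolsub : {ω | hatHMH q r (X ω) = hatHMH q r (Y ω)} ∩ E ⊆
      ⋃ p ∈ P, (X ⁻¹' H p ∩ Y ⁻¹' H p) := by
    rintro ω ⟨hcol, hω⟩
    obtain ⟨hXI, hYI⟩ := hXY_Ioc ω hω
    have hpmem : hatHMH q r (X ω) ∈ P := by
      rw [hP, Finset.mem_product, Finset.mem_Icc, hJ, Finset.mem_Icc]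
      have h1 := rho_ge_one q hXI.1 hXI.2
      have h2 := rho_le q (X ω)
      have h3 := sigma_bounds q r hXI.1 hXI.2
      exact ⟨⟨h1, h2⟩, h3⟩
    refine Set.mem_biUnion hpmem ?_
    have hcol' : hatHMH q r (Y ω) ∈ ({hatHMH q r (X ω)} : Set (ℤ × ℤ)) := by
      rw [Set.mem_singleton_iff]; exact hcol.symm
    exact ⟨⟨rfl, hXI⟩, ⟨hcol', hYI⟩⟩
  have hmain : μ {ω | hatHMH q r (X ω) = hatHMH q r (Y ω)} ≤
      ∑ p ∈ P, μ (X ⁻¹' H p) * μ (Y ⁻¹' H p) := by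
    calc μ {ω | hatHMH q r (X ω) = hatHMH q r (Y ω)}
        ≤ μ (({ω | hatHMH q r (X ω) = hatHMH q r (Y ω)} ∩ E) ∪ Eᶜ) := by
          refine measure_mono (fun ω hω => ?_)
          by_cases h : ω ∈ E
          · exact Or.inl ⟨hω, h⟩
          · exact Or.inr h
      _ ≤ μ ({ω | hatHMH q r (X ω) = hatHMH q r (Y ω)} ∩ E) + μ Eᶜ := measure_union_le _ _
      _ = μ ({ω | hatHMH q r (X ω) = hatHMH q r (Y ω)} ∩ E) := by rw [hEc, add_zero]
      _ ≤ μ (⋃ p ∈ P, (X ⁻¹' H p ∩ Y ⁻¹' H p)) := measure_mono hcolsub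
      _ ≤ ∑ p ∈ P, μ (X ⁻¹' H p ∩ Y ⁻¹' H p) := measure_biUnion_finset_le _ _
      _ = ∑ p ∈ P, μ (X ⁻¹' H p) * μ (Y ⁻¹' H p) :=
          Finset.sum_congr rfl (fun p _ => hprodXY _ _ (hHmeas p) (hHmeas p))
  -- per-pair Y bound
  have hYp : ∀ k j : ℤ, μ (Y ⁻¹' H (k, j)) ≤
      ENNReal.ofReal ((m:ℝ) * (((2:ℝ)^k)⁻¹ / 2^r)) := by
    intro k j
    set c := (1 + (j:ℝ)/2^r) * ((2:ℝ)^k)⁻¹ with hc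
    have hsub : H (k,j) ⊆ Set.Ico c (c + ((2:ℝ)^k)⁻¹/2^r) := by
      rintro x ⟨hx1, _⟩
      exact hat_interval q r (by simpa using hx1)
    calc μ (Y ⁻¹' H (k,j)) ≤ μ (Y ⁻¹' Set.Ico c (c + ((2:ℝ)^k)⁻¹/2^r)) :=
          measure_mono (Set.preimage_mono hsub)
      _ ≤ m * volume (Set.Ico c (c + ((2:ℝ)^k)⁻¹/2^r) ∩ Set.Icc 0 1) :=
          hYS _ measurableSet_Ico
      _ ≤ m * volume (Set.Ico c (c + ((2:ℝ)^k)⁻¹/2^r)) :=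
          mul_le_mul_right (measure_mono Set.inter_subset_left) _
      _ = m * ENNReal.ofReal (((2:ℝ)^k)⁻¹/2^r) := by
          rw [Real.volume_Ico, add_sub_cancel_left]
      _ = ENNReal.ofReal ((m:ℝ) * (((2:ℝ)^k)⁻¹ / 2^r)) := by
          rw [← ENNReal.ofReal_natCast m,
            ← ENNReal.ofReal_mul (by positivity : (0:ℝ) ≤ (m:ℝ))]
  -- per-level X bound
  have hXsum : ∀ k : ℤ, 1 ≤ k → ∑ j ∈ J, μ (X ⁻¹' H (k, j)) ≤
      (if k < K then ENNReal.ofReal ((1 - ((2:ℝ)^k)⁻¹)^m) else 1) := by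
    intro k hk1
    have hdisj : (↑J : Set ℤ).PairwiseDisjoint (fun j => X ⁻¹' H (k, j)) := by
      intro j1 _ j2 _ hne
      refine Set.disjoint_left.mpr ?_
      rintro ω ⟨h1, _⟩ ⟨h2, _⟩
      simp only [Set.mem_preimage, Set.mem_singleton_iff] at h1 h2
      have h12 : ((k,j1) : ℤ×ℤ) = (k,j2) := h1.symm.trans h2
      exact hne (congrArg Prod.snd h12)
    have hUnion : ∑ j ∈ J, μ (X ⁻¹' H (k, j)) = μ (⋃ j ∈ J, X ⁻¹' H (k, j)) :=
      (measure_biUnion_finset hdisj (fun j _ => hXmeas (hHmeas _))).symm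
    rw [hUnion]
    split_ifs with hkK
    · have hsub : (⋃ j ∈ J, X ⁻¹' H (k, j)) ⊆ X ⁻¹' Set.Ici (((2:ℝ)^k)⁻¹) := by
        intro ω hω
        obtain ⟨j, _, hmem⟩ := Set.mem_iUnion₂.mp hω
        obtain ⟨h1, hIoc⟩ := hmem
        rw [Set.mem_preimage, Set.mem_singleton_iff] at h1
        have hrho : rhoHMH q (X ω) = k := congrArg Prod.fst h1
        have := gt_of_rho_lt q (x := X ω) hIoc.1 (by rw [← hK]; exact hkK) hrho
        rw [zpow_neg] at this
        exact le_of_lt this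
      have ha0 : (0:ℝ) ≤ ((2:ℝ)^k)⁻¹ := by positivity
      have ha1 : ((2:ℝ)^k)⁻¹ ≤ 1 := by
        rw [inv_le_one_iff₀]
        right
        exact one_le_zpow₀ (by norm_num) (by omega)
      exact le_trans (measure_mono hsub) (hXtail _ ha0 ha1)
    · exact prob_le_one
  -- combine per level
  have hinner : ∀ k ∈ Finset.Icc 1 K, ∑ j ∈ J, μ (X ⁻¹' H (k,j)) * μ (Y ⁻¹' H (k,j)) ≤
      ENNReal.ofReal ((m:ℝ) * (((2:ℝ)^k)⁻¹ / 2^r)) *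
        (if k < K then ENNReal.ofReal ((1 - ((2:ℝ)^k)⁻¹)^m) else 1) := by
    intro k hk
    rw [Finset.mem_Icc] at hk
    calc ∑ j ∈ J, μ (X ⁻¹' H (k,j)) * μ (Y ⁻¹' H (k,j))
        ≤ ∑ j ∈ J, μ (X ⁻¹' H (k,j)) * ENNReal.ofReal ((m:ℝ) * (((2:ℝ)^k)⁻¹ / 2^r)) :=
          Finset.sum_le_sum (fun j _ => mul_le_mul_right (hYp k j) _)
      _ = (∑ j ∈ J, μ (X ⁻¹' H (k,j))) * ENNReal.ofReal ((m:ℝ) * (((2:ℝ)^k)⁻¹ / 2^r)) := by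
          rw [Finset.sum_mul]
      _ ≤ (if k < K then ENNReal.ofReal ((1 - ((2:ℝ)^k)⁻¹)^m) else 1) *
            ENNReal.ofReal ((m:ℝ) * (((2:ℝ)^k)⁻¹ / 2^r)) :=
          mul_le_mul_left (hXsum k hk.1) _
      _ = _ := mul_comm _ _
  -- sum over levels
  have hIccsplit : Finset.Icc (1:ℤ) K = insert K (Finset.Icc 1 (K-1)) := by
    ext x
    simp only [Finset.mem_Icc, Finset.mem_insert]
    omega
  have hKnot : K ∉ Finset.Icc (1:ℤ) (K-1) := by
    simp only [Finset.mem_Icc]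
    omega
  have htot : μ {ω | hatHMH q r (X ω) = hatHMH q r (Y ω)} ≤
      ENNReal.ofReal ((∑ k ∈ Finset.Icc (1:ℤ) (K-1),
        (m:ℝ) * (((2:ℝ)^k)⁻¹ / 2^r) * (1 - ((2:ℝ)^k)⁻¹)^m)
        + (m:ℝ) * (((2:ℝ)^K)⁻¹ / 2^r)) := by
    refine le_trans hmain ?_
    rw [hP, Finset.sum_product]
    calc ∑ k ∈ Finset.Icc 1 K, ∑ j ∈ J, μ (X ⁻¹' H (k,j)) * μ (Y ⁻¹' H (k,j))
        ≤ ∑ k ∈ Finset.Icc 1 K, (ENNReal.ofReal ((m:ℝ) * (((2:ℝ)^k)⁻¹ / 2^r)) *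
            (if k < K then ENNReal.ofReal ((1 - ((2:ℝ)^k)⁻¹)^m) else 1)) :=
          Finset.sum_le_sum hinner
      _ ≤ ENNReal.ofReal ((∑ k ∈ Finset.Icc (1:ℤ) (K-1),
            (m:ℝ) * (((2:ℝ)^k)⁻¹ / 2^r) * (1 - ((2:ℝ)^k)⁻¹)^m)
            + (m:ℝ) * (((2:ℝ)^K)⁻¹ / 2^r)) := by
          rw [hIccsplit, Finset.sum_insert hKnot]
          have hlast : ENNReal.ofReal ((m:ℝ) * (((2:ℝ)^K)⁻¹ / 2^r)) *
              (if K < K then ENNReal.ofReal ((1 - ((2:ℝ)^K)⁻¹)^m) else 1) =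
              ENNReal.ofReal ((m:ℝ) * (((2:ℝ)^K)⁻¹ / 2^r)) := by
            rw [if_neg (lt_irrefl K), mul_one]
          have hrest : ∀ k ∈ Finset.Icc (1:ℤ) (K-1),
              ENNReal.ofReal ((m:ℝ) * (((2:ℝ)^k)⁻¹ / 2^r)) *
                (if k < K then ENNReal.ofReal ((1 - ((2:ℝ)^k)⁻¹)^m) else 1) =
              ENNReal.ofReal ((m:ℝ) * (((2:ℝ)^k)⁻¹ / 2^r) * (1 - ((2:ℝ)^k)⁻¹)^m) := by
            intro k hk
            rw [Finset.mem_Icc] at hk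
            rw [if_pos (by omega), ← ENNReal.ofReal_mul (by positivity)]
          have hnn : ∀ k ∈ Finset.Icc (1:ℤ) (K-1),
              (0:ℝ) ≤ (m:ℝ) * (((2:ℝ)^k)⁻¹ / 2^r) * (1 - ((2:ℝ)^k)⁻¹)^m := by
            intro k hk
            rw [Finset.mem_Icc] at hk
            have hle1 : ((2:ℝ)^k)⁻¹ ≤ 1 := by
              rw [inv_le_one_iff₀]; right; exact one_le_zpow₀ (by norm_num) (by omega)
            have h4 : (0:ℝ) ≤ (1 - ((2:ℝ)^k)⁻¹)^m := pow_nonneg (by linarith) m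
            positivity
          rw [hlast, Finset.sum_congr rfl hrest,
            ENNReal.ofReal_add (Finset.sum_nonneg hnn) (by positivity),
            ENNReal.ofReal_sum_of_nonneg hnn, add_comm]
  -- real arithmetic
  have hreal : (∑ k ∈ Finset.Icc (1:ℤ) (K-1),
        (m:ℝ) * (((2:ℝ)^k)⁻¹ / 2^r) * (1 - ((2:ℝ)^k)⁻¹)^m)
        + (m:ℝ) * (((2:ℝ)^K)⁻¹ / 2^r) ≤ 6 / 2^r + (n:ℝ) / 2^(2^q + r) := by
    have hKQ : K = ((2^q : ℕ) : ℤ) := by rw [hK]; push_cast; ring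
    have hmap : ∑ k ∈ Finset.Icc (1:ℤ) (K-1),
        (m:ℝ) * (((2:ℝ)^k)⁻¹ / 2^r) * (1 - ((2:ℝ)^k)⁻¹)^m
        = ∑ k ∈ Finset.Icc (1:ℕ) (2^q - 1),
        (m:ℝ) * (((1:ℝ)/2)^k / 2^r) * (1 - ((1:ℝ)/2)^k)^m := by
      refine Finset.sum_bij' (fun k _ => k.toNat) (fun k _ => (k:ℤ)) ?_ ?_ ?_ ?_ ?_
      · intro a ha
        rw [Finset.mem_Icc] at ha ⊢
        rw [hKQ] at ha
        omega
      · intro a ha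
        rw [Finset.mem_Icc] at ha ⊢
        rw [hKQ]
        omega
      · intro a ha
        rw [Finset.mem_Icc] at ha
        omega
      · intro a _
        omega
      · intro a ha
        rw [Finset.mem_Icc] at ha
        have hcast : ((2:ℝ)^a)⁻¹ = ((1:ℝ)/2)^(a.toNat) := by
          rw [one_div, inv_pow]
          congr 1
          rw [← zpow_natCast]
          congr 1
          omega
        rw [hcast]
    rw [hmap]
    have h1 : ∑ k ∈ Finset.Icc (1:ℕ) (2^q - 1),
        (m:ℝ) * (((1:ℝ)/2)^k / 2^r) * (1 - ((1:ℝ)/2)^k)^m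
        = (1/2^r) * ∑ k ∈ Finset.Icc (1:ℕ) (2^q - 1),
        (m:ℝ) * ((1:ℝ)/2)^k * (1 - ((1:ℝ)/2)^k)^m := by
      rw [Finset.mul_sum]
      exact Finset.sum_congr rfl (fun k _ => by ring)
    have h2 : (1/(2:ℝ)^r) * ∑ k ∈ Finset.Icc (1:ℕ) (2^q - 1),
        (m:ℝ) * ((1:ℝ)/2)^k * (1 - ((1:ℝ)/2)^k)^m ≤ (1/2^r) * 6 :=
      mul_le_mul_of_nonneg_left (sumBound m hm _) (by positivity)
    have h3 : (m:ℝ) * (((2:ℝ)^K)⁻¹ / 2^r) ≤ (n:ℝ) / 2^(2^q + r) := by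
      have hKval : ((2:ℝ)^K)⁻¹ = ((2:ℝ)^(2^q : ℕ))⁻¹ := by
        rw [hKQ, zpow_natCast]
      rw [hKval, pow_add]
      have hmn' : (m:ℝ) ≤ (n:ℝ) := by exact_mod_cast hmn
      rw [div_eq_mul_inv (n:ℝ), mul_inv]
      calc (m:ℝ) * (((2:ℝ)^(2^q : ℕ))⁻¹ / 2^r)
          = (m:ℝ) * (((2:ℝ)^(2^q:ℕ))⁻¹ * ((2:ℝ)^r)⁻¹) := by rw [div_eq_mul_inv]
        _ ≤ (n:ℝ) * (((2:ℝ)^(2^q:ℕ))⁻¹ * ((2:ℝ)^r)⁻¹) := by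
            refine mul_le_mul_of_nonneg_right hmn' (by positivity)
    calc (∑ k ∈ Finset.Icc (1:ℕ) (2^q - 1),
        (m:ℝ) * (((1:ℝ)/2)^k / 2^r) * (1 - ((1:ℝ)/2)^k)^m)
        + (m:ℝ) * (((2:ℝ)^K)⁻¹ / 2^r)
        ≤ (1/2^r) * 6 + (n:ℝ) / 2^(2^q + r) := by
          rw [h1]
          exact add_le_add h2 h3
      _ = 6 / 2^r + (n:ℝ) / 2^(2^q + r) := by ring
  refine ENNReal.toReal_le_of_le_ofReal (by positivity) ?_
  exact le_trans htot (ENNReal.ofReal_le_ofReal hreal)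
end
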